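/- arXiv:1006.5740 — 8 statements merged into one kernel-verified Lean document; each statement's English description precedes it below -/
import Mathlib

section
/- Let K ⊆ ℝ² be compact. Then there exists n₀ ∈ ℕ such that for every n ≥ n₀ there is a finite set 𝒥 ⊆ ℤ² with the following properties: setting K_n = ⋃_{(j₁,j₂) ∈ 𝒥} [j₁/n, (j₁+1)/n] × [j₂/n, (j₂+1)/n], one has K ⊆ K_n and (K − K) ∩ ℤ² = (K_n − K_n) ∩ ℤ². -/
open Pointwise

/-- The closed grid square `[j₁/n, (j₁+1)/n] × [j₂/n, (j₂+1)/n]`. -/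
def gridSquare (n : ℕ) (J : ℤ × ℤ) : Set (ℝ × ℝ) :=
  Set.Icc ((J.1 : ℝ) / n) ((J.1 + 1 : ℝ) / n) ×ˢ
    Set.Icc ((J.2 : ℝ) / n) ((J.2 + 1 : ℝ) / n)

/-- The set of integer points of the plane. -/
def intLattice : Set (ℝ × ℝ) := {x | ∃ a b : ℤ, x = ((a : ℝ), (b : ℝ))}

/-- Distinct lattice points are at distance at least 1. -/
lemma intLattice_dist {x y : ℝ × ℝ} (hx : x ∈ intLattice) (hy : y ∈ intLattice)
    (hxy : x ≠ y) : 1 ≤ dist x y := by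
  obtain ⟨a, b, rfl⟩ := hx
  obtain ⟨a', b', rfl⟩ := hy
  rw [Prod.dist_eq]
  have key : ∀ c c' : ℤ, c ≠ c' → (1 : ℝ) ≤ dist (c : ℝ) (c' : ℝ) := by
    intro c c' hcc
    rw [Real.dist_eq, ← Int.cast_sub, ← Int.cast_abs]
    exact_mod_cast Int.one_le_abs (sub_ne_zero.2 hcc)
  rcases eq_or_ne a a' with h1 | h1
  · rcases eq_or_ne b b' with h2 | h2
    · exact absurd (by simp [h1, h2]) hxy
    · exact le_max_of_le_right (key b b' h2)
  · exact le_max_of_le_left (key a a' h1)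

/-- Any subset of the integer lattice is closed. -/
lemma closed_of_subset_intLattice {S : Set (ℝ × ℝ)} (hS : S ⊆ intLattice) :
    IsClosed S := by
  rw [← isOpen_compl_iff] at *
  rw [Metric.isOpen_iff]
  intro x hx
  by_cases hxS : ∃ y ∈ S, dist x y < 1/2
  · obtain ⟨y, hyS, hxy⟩ := hxS
    have hxney : x ≠ y := fun h => hx (h ▸ hyS)
    refine ⟨min (dist x y) (1/2 - dist x y),
      lt_min (dist_pos.2 hxney) (by linarith), ?_⟩
    intro z hz
    simp only [Metric.mem_ball] at hz
    intro hzS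
    have hzy : z ≠ y := by
      rintro rfl
      have := lt_of_lt_of_le hz (min_le_left _ _)
      rw [dist_comm] at this
      exact lt_irrefl _ this
    have h1 : (1:ℝ) ≤ dist z y := intLattice_dist (hS hzS) (hS hyS) hzy
    have h2 : dist z y ≤ dist z x + dist x y := dist_triangle _ _ _
    have h3 : dist z x < 1/2 - dist x y :=
      lt_of_lt_of_le hz (min_le_right _ _)
    linarith
  · push_neg at hxS
    refine ⟨1/2, by norm_num, ?_⟩
    intro z hz hzS
    simp only [Metric.mem_ball] at hz
    rw [dist_comm] at hz
    exact absurd hz (not_lt.2 (hxS z hzS))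

theorem grid_approx (K : Set (ℝ × ℝ)) (hK : IsCompact K) :
    ∃ n₀ : ℕ, ∀ n : ℕ, n₀ ≤ n →
      ∃ 𝒥 : Finset (ℤ × ℤ),
        K ⊆ (⋃ J ∈ 𝒥, gridSquare n J) ∧
        (K - K) ∩ intLattice =
          ((⋃ J ∈ 𝒥, gridSquare n J) - (⋃ J ∈ 𝒥, gridSquare n J)) ∩ intLattice := by
  -- K is bounded
  obtain ⟨r, hr⟩ := hK.isBounded.subset_closedBall 0
  -- K - K is compact
  have hD : IsCompact (K - K) := by
    rw [← Set.sub_image_prod]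
    exact (hK.prod hK).image continuous_sub
  -- lattice points outside K - K form a closed set
  set S := intLattice \ (K - K) with hSdef
  have hSclosed : IsClosed S := closed_of_subset_intLattice Set.diff_subset
  have hDS : K - K ⊆ Sᶜ := fun p hp hpS => hpS.2 hp
  obtain ⟨δ, hδ, hth⟩ := hD.exists_thickening_subset_open hSclosed.isOpen_compl hDS
  refine ⟨⌈2/δ⌉₊ + 1, fun n hn => ?_⟩
  have hn1 : 1 ≤ n := le_trans (Nat.le_add_left 1 _) hn
  have hnpos : (0:ℝ) < n := by exact_mod_cast hn1
  have h2n : 2 / (n:ℝ) < δ := by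
    have hcast : (⌈2/δ⌉₊ : ℝ) + 1 ≤ (n : ℝ) := by exact_mod_cast hn
    have h1 : 2/δ < (n:ℝ) := lt_of_le_of_lt (Nat.le_ceil _) (by linarith)
    rw [div_lt_iff₀ hδ] at h1
    rw [div_lt_iff₀ hnpos]
    nlinarith
  -- the collection of squares meeting K
  have hfin : {J : ℤ × ℤ | (gridSquare n J ∩ K).Nonempty}.Finite := by
    refine Set.Finite.subset (Set.finite_Icc
      ((⌈-((n:ℝ)*r)-1⌉, ⌈-((n:ℝ)*r)-1⌉) : ℤ × ℤ) ((⌊(n:ℝ)*r⌋, ⌊(n:ℝ)*r⌋) : ℤ × ℤ)) ?_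
    rintro ⟨j₁, j₂⟩ ⟨x, hxJ, hxK⟩
    have hx1 : |x.1| ≤ r := by
      have := hr hxK
      rw [Metric.mem_closedBall, dist_zero_right] at this
      exact le_trans (norm_fst_le x) this
    have hx2 : |x.2| ≤ r := by
      have := hr hxK
      rw [Metric.mem_closedBall, dist_zero_right] at this
      exact le_trans (norm_snd_le x) this
    obtain ⟨⟨ha1, ha2⟩, ⟨hb1, hb2⟩⟩ := hxJ
    have habs1 := abs_le.1 hx1
    have habs2 := abs_le.1 hx2
    rw [div_le_iff₀ hnpos] at ha1 hb1
    rw [le_div_iff₀ hnpos] at ha2 hb2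
    constructor
    · constructor
      · refine Int.ceil_le.2 ?_
        push_cast
        nlinarith [mul_le_mul_of_nonneg_left habs1.1 (le_of_lt hnpos)]
      · refine Int.ceil_le.2 ?_
        push_cast
        nlinarith [mul_le_mul_of_nonneg_left habs2.1 (le_of_lt hnpos)]
    · constructor
      · refine Int.le_floor.2 ?_
        push_cast
        nlinarith [mul_le_mul_of_nonneg_left habs1.2 (le_of_lt hnpos)]
      · refine Int.le_floor.2 ?_
        push_cast
        nlinarith [mul_le_mul_of_nonneg_left habs2.2 (le_of_lt hnpos)]
  have mem_sq : ∀ x : ℝ × ℝ, x ∈ gridSquare n (⌊(n:ℝ)*x.1⌋, ⌊(n:ℝ)*x.2⌋) := by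
    intro x
    have h : ∀ t : ℝ, t ∈ Set.Icc ((⌊(n:ℝ)*t⌋:ℝ)/n) (((⌊(n:ℝ)*t⌋:ℝ) + 1)/n) := by
      intro t
      constructor
      · rw [div_le_iff₀ hnpos, mul_comm t (n:ℝ)]
        exact Int.floor_le _
      · rw [le_div_iff₀ hnpos, mul_comm t (n:ℝ)]
        exact (Int.lt_floor_add_one _).le
    exact ⟨h x.1, h x.2⟩
  have hcover : K ⊆ (⋃ J ∈ hfin.toFinset, gridSquare n J) := by
    intro x hx
    exact Set.mem_iUnion₂.2 ⟨(⌊(n:ℝ)*x.1⌋, ⌊(n:ℝ)*x.2⌋),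
      (Set.Finite.mem_toFinset hfin).2 ⟨x, mem_sq x, hx⟩, mem_sq x⟩
  refine ⟨hfin.toFinset, hcover, ?_⟩
  apply Set.Subset.antisymm
  · rintro p ⟨hp, hpL⟩
    obtain ⟨x, hx, y, hy, rfl⟩ := Set.mem_sub.1 hp
    exact ⟨Set.sub_mem_sub (hcover hx) (hcover hy), hpL⟩
  · rintro p ⟨hp, hpL⟩
    obtain ⟨x, hx, y, hy, rfl⟩ := Set.mem_sub.1 hp
    -- x lies in a square that meets K at x₀
    obtain ⟨Jx, hJx, hxJ⟩ := Set.mem_iUnion₂.1 hx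
    obtain ⟨Jy, hJy, hyJ⟩ := Set.mem_iUnion₂.1 hy
    rw [Set.Finite.mem_toFinset] at hJx hJy
    obtain ⟨x₀, hx₀J, hx₀K⟩ := hJx
    obtain ⟨y₀, hy₀J, hy₀K⟩ := hJy
    -- distance estimates: any two points of a grid square are within 1/n
    have sq_dist : ∀ (J : ℤ × ℤ) (u v : ℝ × ℝ), u ∈ gridSquare n J → v ∈ gridSquare n J →
        dist u v ≤ 1 / n := by
      rintro J u v ⟨hu1, hu2⟩ ⟨hv1, hv2⟩
      rw [Prod.dist_eq]
      have hlen : ∀ j : ℤ, ((j:ℝ) + 1) / n - (j:ℝ) / n = 1 / n := by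
        intro j; field_simp; ring
      refine max_le ?_ ?_
      · calc dist u.1 v.1 ≤ ((J.1:ℝ) + 1) / n - (J.1:ℝ) / n :=
              Real.dist_le_of_mem_Icc hu1 hv1
          _ = 1 / n := hlen J.1
      · calc dist u.2 v.2 ≤ ((J.2:ℝ) + 1) / n - (J.2:ℝ) / n :=
              Real.dist_le_of_mem_Icc hu2 hv2
          _ = 1 / n := hlen J.2
    have hdx : dist x x₀ ≤ 1 / n := sq_dist Jx x x₀ hxJ hx₀J
    have hdy : dist y y₀ ≤ 1 / n := sq_dist Jy y y₀ hyJ hy₀J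
    have hdist : dist (x - y) (x₀ - y₀) < δ := by
      calc dist (x - y) (x₀ - y₀) ≤ dist x x₀ + dist y y₀ := dist_sub_sub_le _ _ _ _
        _ ≤ 1/n + 1/n := add_le_add hdx hdy
        _ = 2/(n:ℝ) := by ring
        _ < δ := h2n
    have hthick : x - y ∈ Metric.thickening δ (K - K) :=
      Metric.mem_thickening_iff.2 ⟨x₀ - y₀, Set.sub_mem_sub hx₀K hy₀K, hdist⟩
    have hnotS : x - y ∉ S := hth hthick
    by_contra hcon
    exact hnotS ⟨hpL, fun h => hcon ⟨h, hpL⟩⟩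
end

section
/- There does not exist a compact set K ⊆ ℝ² such that K + ℤ² = ℝ² and (K − K) ∩ ℤ² ⊆ (ℤ × {0}) ∪ ({0} × ℤ). -/
open Pointwise

namespace NoCFD

def Adj (u w : ℤ × ℤ) : Prop :=
  (w.1 = u.1 + 1 ∧ w.2 = u.2) ∨ (w.1 + 1 = u.1 ∧ w.2 = u.2) ∨
  (w.1 = u.1 ∧ w.2 = u.2 + 1) ∨ (w.1 = u.1 ∧ w.2 + 1 = u.2) ∨
  (w.1 = u.1 + 1 ∧ w.2 + 1 = u.2) ∨ (w.1 + 1 = u.1 ∧ w.2 = u.2 + 1)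

lemma Adj.symm {u w : ℤ × ℤ} (h : Adj u w) : Adj w u := by
  unfold Adj at *; omega

def Bd (m : ℕ) (z : ℤ × ℤ) : Prop := 0 ≤ z.1 ∧ 0 ≤ z.2 ∧ z.1 + z.2 ≤ m

def maj (x y z : Bool) : Bool := (x && y) || (x && z) || (y && z)

lemma twoOf {x y z v : Bool} (h : maj x y z = v) :
    (x = v ∧ y = v) ∨ (x = v ∧ z = v) ∨ (y = v ∧ z = v) := by
  revert h; cases x <;> cases y <;> cases z <;> cases v <;> decide

def TMem (y z : ℤ × ℤ) : Prop := z = (y.1 + 1, y.2) ∨ z = (y.1, y.2 + 1) ∨ z = y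

lemma TMem_bd {m : ℕ} {y z : ℤ × ℤ} (hy : Bd m y) (hz : TMem y z) : Bd (m + 1) z := by
  rcases hz with h | h | h <;> subst h <;> simp only [Bd] at hy ⊢ <;> simp <;> omega

lemma triLink {y z z' : ℤ × ℤ} (hz : TMem y z) (hz' : TMem y z') : z = z' ∨ Adj z z' := by
  rcases hz with h | h | h <;> rcases hz' with h' | h' | h' <;> subst h <;> subst h' <;>
    simp [Adj, Prod.ext_iff] <;> omega

def Step (c : ℤ × ℤ → Bool) (m : ℕ) (v : Bool) (u w : ℤ × ℤ) : Prop :=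
  Adj u w ∧ Bd m u ∧ Bd m w ∧ c u = v ∧ c w = v

lemma Step.symm {c m v} {u w : ℤ × ℤ} (h : Step c m v u w) : Step c m v w u :=
  ⟨h.1.symm, h.2.2.1, h.2.1, h.2.2.2.2, h.2.2.2.1⟩

def Reach (c : ℤ × ℤ → Bool) (m : ℕ) (v : Bool) : ℤ × ℤ → ℤ × ℤ → Prop :=
  Relation.ReflTransGen (Step c m v)

def majC (c : ℤ × ℤ → Bool) (y : ℤ × ℤ) : Bool :=
  maj (c (y.1 + 1, y.2)) (c (y.1, y.2 + 1)) (c y)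

section cores
variable (c : ℤ × ℤ → Bool) (v : Bool)

/-- cross-pair existence for the step y = (a,b) → y' = (a+1,b). -/
lemma core1 (a b : ℤ) (hy : majC c (a, b) = v) (hy' : majC c (a + 1, b) = v) :
    ∃ z z', c z = v ∧ c z' = v ∧ TMem (a, b) z ∧ TMem (a + 1, b) z' ∧ (z = z' ∨ Adj z z') := by
  unfold majC at hy hy'; simp only at hy hy'
  rcases twoOf hy with ⟨h1, h2⟩ | ⟨h1, h2⟩ | ⟨h1, h2⟩ <;>
    rcases twoOf hy' with ⟨h3, h4⟩ | ⟨h3, h4⟩ | ⟨h3, h4⟩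
  · exact ⟨_, _, h1, h1, Or.inl rfl, Or.inr (Or.inr rfl), Or.inl rfl⟩
  · exact ⟨_, _, h1, h1, Or.inl rfl, Or.inr (Or.inr rfl), Or.inl rfl⟩
  · exact ⟨_, _, h1, h1, Or.inl rfl, Or.inr (Or.inr rfl), Or.inl rfl⟩
  · exact ⟨_, _, h1, h1, Or.inl rfl, Or.inr (Or.inr rfl), Or.inl rfl⟩
  · exact ⟨_, _, h1, h1, Or.inl rfl, Or.inr (Or.inr rfl), Or.inl rfl⟩
  · exact ⟨_, _, h1, h1, Or.inl rfl, Or.inr (Or.inr rfl), Or.inl rfl⟩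
  -- hy case {P2,P3} : h1 : c (a,b+1) = v, h2 : c (a,b) = v
  · -- Q case {Q1,Q2} : h3 : c (a+2,b) = v, h4 : c (a+1,b+1) = v
    exact ⟨_, _, h1, h4, Or.inr (Or.inl rfl), Or.inr (Or.inl rfl),
      Or.inr (by simp [Adj] <;> omega)⟩
  · -- Q case {Q1,Q3} : h3 : c (a+2,b), h4 : c (a+1,b)
    exact ⟨_, _, h2, h4, Or.inr (Or.inr rfl), Or.inr (Or.inr rfl),
      Or.inr (by simp [Adj] <;> omega)⟩
  · -- Q case {Q2,Q3} : h3 : c (a+1,b+1), h4 : c (a+1,b)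
    exact ⟨_, _, h2, h4, Or.inr (Or.inr rfl), Or.inr (Or.inr rfl),
      Or.inr (by simp [Adj] <;> omega)⟩

/-- cross-pair existence for the step y = (a,b) → y' = (a,b+1). -/
lemma core2 (a b : ℤ) (hy : majC c (a, b) = v) (hy' : majC c (a, b + 1) = v) :
    ∃ z z', c z = v ∧ c z' = v ∧ TMem (a, b) z ∧ TMem (a, b + 1) z' ∧ (z = z' ∨ Adj z z') := by
  unfold majC at hy hy'; simp only at hy hy'
  rcases twoOf hy with ⟨h1, h2⟩ | ⟨h1, h2⟩ | ⟨h1, h2⟩ <;>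
    rcases twoOf hy' with ⟨h3, h4⟩ | ⟨h3, h4⟩ | ⟨h3, h4⟩
  -- hy case {P1,P2} : h2 : c (a,b+1) = v  (this is Q3)
  · exact ⟨_, _, h2, h2, Or.inr (Or.inl rfl), Or.inr (Or.inr rfl), Or.inl rfl⟩
  · exact ⟨_, _, h2, h2, Or.inr (Or.inl rfl), Or.inr (Or.inr rfl), Or.inl rfl⟩
  · exact ⟨_, _, h2, h2, Or.inr (Or.inl rfl), Or.inr (Or.inr rfl), Or.inl rfl⟩
  -- hy case {P1,P3} : h1 : c (a+1,b), h2 : c (a,b)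
  · -- Q {Q1,Q2} h3 : c (a+1,b+1), h4 : c (a,b+2)
    exact ⟨_, _, h1, h3, Or.inl rfl, Or.inl rfl, Or.inr (by simp [Adj] <;> omega)⟩
  · -- Q {Q1,Q3} h3 : c (a+1,b+1), h4 : c (a,b+1)
    exact ⟨_, _, h1, h3, Or.inl rfl, Or.inl rfl, Or.inr (by simp [Adj] <;> omega)⟩
  · -- Q {Q2,Q3} h3 : c (a,b+2), h4 : c (a,b+1)
    exact ⟨_, _, h2, h4, Or.inr (Or.inr rfl), Or.inr (Or.inr rfl),
      Or.inr (by simp [Adj] <;> omega)⟩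
  -- hy case {P2,P3} : h1 : c (a,b+1) = v (Q3)
  · exact ⟨_, _, h1, h1, Or.inr (Or.inl rfl), Or.inr (Or.inr rfl), Or.inl rfl⟩
  · exact ⟨_, _, h1, h1, Or.inr (Or.inl rfl), Or.inr (Or.inr rfl), Or.inl rfl⟩
  · exact ⟨_, _, h1, h1, Or.inr (Or.inl rfl), Or.inr (Or.inr rfl), Or.inl rfl⟩

/-- cross-pair existence for the step y = (a,b+1) → y' = (a+1,b)  (diagonal). -/
lemma core3 (a b : ℤ) (hy : majC c (a, b + 1) = v) (hy' : majC c (a + 1, b) = v) :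
    ∃ z z', c z = v ∧ c z' = v ∧ TMem (a, b + 1) z ∧ TMem (a + 1, b) z' ∧ (z = z' ∨ Adj z z') := by
  unfold majC at hy hy'; simp only at hy hy'
  -- T_y : P1 = (a+1,b+1), P2 = (a,b+2), P3 = (a,b+1)
  -- T_y' : Q1 = (a+2,b), Q2 = (a+1,b+1) = P1, Q3 = (a+1,b)
  rcases twoOf hy with ⟨h1, h2⟩ | ⟨h1, h2⟩ | ⟨h1, h2⟩ <;>
    rcases twoOf hy' with ⟨h3, h4⟩ | ⟨h3, h4⟩ | ⟨h3, h4⟩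
  -- hy {P1,P2}: h1 : c (a+1,b+1)
  · exact ⟨_, _, h1, h1, Or.inl rfl, Or.inr (Or.inl rfl), Or.inl rfl⟩
  · -- Q {Q1,Q3}: h3 : c (a+2,b), h4 : c (a+1,b)
    exact ⟨_, _, h1, h4, Or.inl rfl, Or.inr (Or.inr rfl), Or.inr (by simp [Adj] <;> omega)⟩
  · exact ⟨_, _, h1, h1, Or.inl rfl, Or.inr (Or.inl rfl), Or.inl rfl⟩
  -- hy {P1,P3}: h1 : c (a+1,b+1), h2 : c (a,b+1)
  · exact ⟨_, _, h1, h1, Or.inl rfl, Or.inr (Or.inl rfl), Or.inl rfl⟩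
  · exact ⟨_, _, h1, h4, Or.inl rfl, Or.inr (Or.inr rfl), Or.inr (by simp [Adj] <;> omega)⟩
  · exact ⟨_, _, h1, h1, Or.inl rfl, Or.inr (Or.inl rfl), Or.inl rfl⟩
  -- hy {P2,P3}: h1 : c (a,b+2), h2 : c (a,b+1)
  · -- Q {Q1,Q2}: h3 : c (a+2,b), h4 : c (a+1,b+1)
    exact ⟨_, _, h2, h4, Or.inr (Or.inr rfl), Or.inr (Or.inl rfl),
      Or.inr (by simp [Adj] <;> omega)⟩
  · -- Q {Q1,Q3}: h4 : c (a+1,b)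
    exact ⟨_, _, h2, h4, Or.inr (Or.inr rfl), Or.inr (Or.inr rfl),
      Or.inr (by simp [Adj] <;> omega)⟩
  · -- Q {Q2,Q3}: h3 : c (a+1,b+1)
    exact ⟨_, _, h2, h3, Or.inr (Or.inr rfl), Or.inr (Or.inl rfl),
      Or.inr (by simp [Adj] <;> omega)⟩

end cores

lemma cross (c : ℤ × ℤ → Bool) (v : Bool) {y y' : ℤ × ℤ} (hadj : Adj y y')
    (hy : majC c y = v) (hy' : majC c y' = v) :
    ∃ z z', c z = v ∧ c z' = v ∧ TMem y z ∧ TMem y' z' ∧ (z = z' ∨ Adj z z') := by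
  obtain ⟨a, b⟩ := y; obtain ⟨a', b'⟩ := y'
  rcases hadj with ⟨e1, e2⟩ | ⟨e1, e2⟩ | ⟨e1, e2⟩ | ⟨e1, e2⟩ | ⟨e1, e2⟩ | ⟨e1, e2⟩
  · -- (a',b') = (a+1,b)
    have ha : a' = a + 1 := e1; have hb : b' = b := e2; subst ha; subst hb
    exact core1 c v _ _ hy hy'
  · -- (a,b) = (a'+1,b')
    have e1' : a' + 1 = a := e1
    have ha : a = a' + 1 := e1'.symm
    have hb : b = b' := (show b' = b from e2).symm; subst ha; subst hb
    obtain ⟨z, z', hz, hz', t, t', l⟩ := core1 c v _ _ hy' hy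
    exact ⟨z', z, hz', hz, t', t, by rcases l with l | l; exact Or.inl l.symm; exact Or.inr l.symm⟩
  · have ha : a' = a := e1; have hb : b' = b + 1 := e2; subst ha; subst hb
    exact core2 c v _ _ hy hy'
  · have ha : a' = a := e1
    have e2' : b' + 1 = b := e2
    have hb : b = b' + 1 := e2'.symm
    subst ha; subst hb
    obtain ⟨z, z', hz, hz', t, t', l⟩ := core2 c v _ _ hy' hy
    exact ⟨z', z, hz', hz, t', t, by rcases l with l | l; exact Or.inl l.symm; exact Or.inr l.symm⟩
  · -- y' = (a+1, b-1) : write b = b'+1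
    have ha : a' = a + 1 := e1
    have e2' : b' + 1 = b := e2
    have hb : b = b' + 1 := e2'.symm
    subst ha; subst hb
    exact core3 c v _ _ hy hy'
  · -- y = (a'+1, b'-1) : a = a'+1? no: e1 : a' + 1 = a, e2 : b' = b + 1
    have e1' : a' + 1 = a := e1
    have ha : a = a' + 1 := e1'.symm
    have hb : b' = b + 1 := e2; subst ha; subst hb
    obtain ⟨z, z', hz, hz', t, t', l⟩ := core3 c v _ _ hy' hy
    exact ⟨z', z, hz', hz, t', t, by rcases l with l | l; exact Or.inl l.symm; exact Or.inr l.symm⟩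

lemma reach_lift (c : ℤ × ℤ → Bool) (m : ℕ) (v : Bool) {y y' : ℤ × ℤ}
    (h : Relation.ReflTransGen (Step (majC c) m v) y y') (hy : Bd m y) :
    ∀ z z', TMem y z → c z = v → TMem y' z' → c z' = v → Reach c (m + 1) v z z' := by
  induction h with
  | refl =>
      intro z z' t hz t' hz'
      rcases triLink t t' with h | h
      · subst h; exact .refl
      · exact Relation.ReflTransGen.single ⟨h, TMem_bd hy t, TMem_bd hy t', hz, hz'⟩
  | @tail mid fin hch hst ih =>
      intro z z' t hz t' hz'
      obtain ⟨hadj, hbw, hby', hcw, hcy'⟩ := hst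
      obtain ⟨ζ, ζ', hζ, hζ', tζ, tζ', l⟩ := cross c v hadj hcw hcy'
      have r1 : Reach c (m + 1) v z ζ := ih z ζ t hz tζ hζ
      have r2 : Reach c (m + 1) v ζ ζ' := by
        rcases l with l | l
        · subst l; exact .refl
        · exact Relation.ReflTransGen.single ⟨l, TMem_bd hbw tζ, TMem_bd hby' tζ', hζ, hζ'⟩
      have r3 : Reach c (m + 1) v ζ' z' := by
        rcases triLink tζ' t' with l | l
        · subst l; exact .refl
        · exact Relation.ReflTransGen.single ⟨l, TMem_bd hby' tζ', TMem_bd hby' t', hζ', hz'⟩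
      exact (r1.trans r2).trans r3

lemma pick_i (c : ℤ × ℤ → Bool) (v : Bool) {y : ℤ × ℤ} (h : majC c y = v) :
    ∃ z, TMem y z ∧ c z = v ∧ z.1 = y.1 := by
  rcases twoOf h with ⟨h1, h2⟩ | ⟨h1, h2⟩ | ⟨h1, h2⟩
  · exact ⟨_, Or.inr (Or.inl rfl), h2, rfl⟩
  · exact ⟨_, Or.inr (Or.inr rfl), h2, rfl⟩
  · exact ⟨_, Or.inr (Or.inl rfl), h1, rfl⟩

lemma pick_j (c : ℤ × ℤ → Bool) (v : Bool) {y : ℤ × ℤ} (h : majC c y = v) :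
    ∃ z, TMem y z ∧ c z = v ∧ z.2 = y.2 := by
  rcases twoOf h with ⟨h1, h2⟩ | ⟨h1, h2⟩ | ⟨h1, h2⟩
  · exact ⟨_, Or.inl rfl, h1, rfl⟩
  · exact ⟨_, Or.inl rfl, h1, rfl⟩
  · exact ⟨_, Or.inr (Or.inr rfl), h2, rfl⟩

lemma pick_d (c : ℤ × ℤ → Bool) (v : Bool) {y : ℤ × ℤ} (h : majC c y = v) :
    ∃ z, TMem y z ∧ c z = v ∧ z.1 + z.2 = y.1 + y.2 + 1 := by
  rcases twoOf h with ⟨h1, h2⟩ | ⟨h1, h2⟩ | ⟨h1, h2⟩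
  · exact ⟨_, Or.inl rfl, h1, by simp; ring⟩
  · exact ⟨_, Or.inl rfl, h1, by simp; ring⟩
  · exact ⟨_, Or.inr (Or.inl rfl), h1, by simp; ring⟩

theorem Ythm (m : ℕ) (c : ℤ × ℤ → Bool) :
    ∃ (v : Bool) (a b d : ℤ × ℤ), Bd m a ∧ Bd m b ∧ Bd m d ∧
      c a = v ∧ c b = v ∧ c d = v ∧ a.1 = 0 ∧ b.2 = 0 ∧ d.1 + d.2 = m ∧
      Reach c m v a b ∧ Reach c m v a d := by
  induction m generalizing c with
  | zero =>
      exact ⟨c (0, 0), (0, 0), (0, 0), (0, 0), by simp [Bd], by simp [Bd], by simp [Bd],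
        rfl, rfl, rfl, rfl, rfl, by simp, .refl, .refl⟩
  | succ m ih =>
      obtain ⟨v, a', b', d', hba, hbb, hbd, hca, hcb, hcd, hia, hjb, hdd, rab, rad⟩ := ih (majC c)
      obtain ⟨a, ta, hcaa, ha1⟩ := pick_i c v hca
      obtain ⟨b, tb, hcbb, hb2⟩ := pick_j c v hcb
      obtain ⟨d, td, hcdd, hd⟩ := pick_d c v hcd
      refine ⟨v, a, b, d, TMem_bd hba ta, TMem_bd hbb tb, TMem_bd hbd td, hcaa, hcbb, hcdd,
        by rw [ha1, hia], by rw [hb2, hjb], by omega, ?_, ?_⟩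
      · exact reach_lift c m v rab hba a b ta hcaa tb hcbb
      · exact reach_lift c m v rad hba a d ta hcaa td hcdd

lemma firstExit {α : Type*} {S : α → α → Prop} {P : α → Prop} {b d : α}
    (h : Relation.ReflTransGen S b d) (hb : P b) :
    ∃ u, P u ∧ Relation.ReflTransGen (fun p q => S p q ∧ P p ∧ P q) b u ∧
      (u = d ∨ ∃ w, S u w ∧ ¬ P w) := by
  induction h with
  | refl => exact ⟨b, hb, .refl, Or.inl rfl⟩
  | @tail mid fin hch hst ih =>
      obtain ⟨u, hu, hchP, hl⟩ := ih
      rcases hl with rfl | hl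
      · by_cases hPd : P fin
        · exact ⟨fin, hPd, hchP.tail ⟨hst, hu, hPd⟩, Or.inl rfl⟩
        · exact ⟨u, hu, hchP, Or.inr ⟨fin, hst, hPd⟩⟩
      · exact ⟨u, hu, hchP, Or.inr hl⟩

def Rh (n : ℕ) (z : ℤ × ℤ) : Prop :=
  0 ≤ z.1 ∧ z.1 ≤ (n : ℤ) - 1 ∧ 0 ≤ z.2 ∧ z.2 ≤ (n : ℤ) - 1

def RStep (n : ℕ) (g : ℤ × ℤ → Bool) (v : Bool) (p q : ℤ × ℤ) : Prop :=
  Adj p q ∧ Rh n p ∧ Rh n q ∧ g p = v ∧ g q = v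

theorem rhombus (n : ℕ) (hn : 1 ≤ n) (g : ℤ × ℤ → Bool) :
    ∃ (v : Bool) (a u : ℤ × ℤ), Rh n a ∧ Rh n u ∧ g a = v ∧ g u = v ∧
      Relation.ReflTransGen (RStep n g v) a u ∧
      (v = true → a.2 = 0 ∧ u.2 = (n : ℤ) - 1) ∧
      (v = false → a.1 = 0 ∧ u.1 = (n : ℤ) - 1) := by
  classical
  set m : ℕ := 2 * n - 2 with hm
  set c : ℤ × ℤ → Bool :=
    fun z => if (n : ℤ) ≤ z.2 then true else if (n : ℤ) ≤ z.1 then false else g z with hc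
  have hmz : (m : ℤ) = 2 * (n : ℤ) - 2 := by omega
  have hct : ∀ z : ℤ × ℤ, Bd m z → c z = true → z.2 ≤ (n : ℤ) - 1 → Rh n z ∧ g z = true := by
    intro z hbz hcz hz2
    have h2 : ¬ ((n : ℤ) ≤ z.2) := by omega
    rw [hc] at hcz; simp only [h2, if_false] at hcz
    by_cases h1 : (n : ℤ) ≤ z.1
    · simp [h1] at hcz
    · simp only [h1, if_false] at hcz
      obtain ⟨hb1, hb2, hb3⟩ := hbz
      exact ⟨⟨hb1, by omega, hb2, hz2⟩, hcz⟩
  have hcf : ∀ z : ℤ × ℤ, Bd m z → c z = false → z.1 ≤ (n : ℤ) - 1 → Rh n z ∧ g z = false := by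
    intro z hbz hcz hz1
    rw [hc] at hcz
    by_cases h2 : (n : ℤ) ≤ z.2
    · simp [h2] at hcz
    · simp only [h2, if_false] at hcz
      have h1 : ¬ ((n : ℤ) ≤ z.1) := by omega
      simp only [h1, if_false] at hcz
      obtain ⟨hb1, hb2, hb3⟩ := hbz
      exact ⟨⟨hb1, hz1, hb2, by omega⟩, hcz⟩
  obtain ⟨v, a, b, d, hba, hbb, hbd, hca, hcb, hcd, hia, hjb, hdd, rab, rad⟩ := Ythm m c
  have hsym : Symmetric (Step c m v) := fun _ _ h => h.symm
  cases v
  · -- v = false : use a and the chain a → d, cut at first exit of {z.1 ≤ n-1}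
    have ha2 : a.2 ≤ (n : ℤ) - 1 := by
      by_contra h
      have : c a = true := by rw [hc]; simp only [if_pos (by omega : (n : ℤ) ≤ a.2)]
      rw [hca] at this; exact Bool.false_ne_true this
    obtain ⟨hRa, hga⟩ := hcf a hba hca (by rw [hia]; omega)
    obtain ⟨u, hu, hchP, hl⟩ := firstExit (P := fun z => z.1 ≤ (n : ℤ) - 1) rad (by show a.1 ≤ (n:ℤ)-1; omega)
    have hu1 : u.1 = (n : ℤ) - 1 ∧ c u = false ∧ Bd m u := by
      rcases hl with rfl | ⟨w, hSw, hnPw⟩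
      · refine ⟨?_, hcd, hbd⟩
        obtain ⟨hRd, hgd⟩ := hcf u hbd hcd hu
        obtain ⟨_, _, _, h4⟩ := hRd
        omega
      · obtain ⟨hadj, hbu, hbw, hcu, hcw⟩ := hSw
        refine ⟨?_, hcu, hbu⟩
        have : ¬ (w.1 ≤ (n : ℤ) - 1) := hnPw
        unfold Adj at hadj; omega
    obtain ⟨hu1, hcu, hbu⟩ := hu1
    obtain ⟨hRu, hgu⟩ := hcf u hbu hcu hu
    refine ⟨false, a, u, hRa, hRu, hga, hgu, ?_, by simp, fun _ => ⟨hia, hu1⟩⟩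
    refine Relation.ReflTransGen.mono ?_ _ _ hchP
    rintro p q ⟨⟨hadj, hbp, hbq, hcp, hcq⟩, hPp, hPq⟩
    obtain ⟨hRp, hgp⟩ := hcf p hbp hcp hPp
    obtain ⟨hRq, hgq⟩ := hcf q hbq hcq hPq
    exact ⟨hadj, hRp, hRq, hgp, hgq⟩
  · -- v = true : use b and the chain b → d, cut at first exit of {z.2 ≤ n-1}
    have rbd : Relation.ReflTransGen (Step c m true) b d :=
      ((@Relation.ReflTransGen.symmetric _ _ ⟨fun _ _ h => hsym h⟩).symm _ _ rab).trans rad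
    obtain ⟨hRb, hgb⟩ := hct b hbb hcb (by rw [hjb]; omega)
    obtain ⟨u, hu, hchP, hl⟩ := firstExit (P := fun z => z.2 ≤ (n : ℤ) - 1) rbd (by show b.2 ≤ (n:ℤ)-1; omega)
    have hu1 : u.2 = (n : ℤ) - 1 ∧ c u = true ∧ Bd m u := by
      rcases hl with rfl | ⟨w, hSw, hnPw⟩
      · refine ⟨?_, hcd, hbd⟩
        obtain ⟨hRd, hgd⟩ := hct u hbd hcd hu
        obtain ⟨_, h2, _, _⟩ := hRd
        omega
      · obtain ⟨hadj, hbu, hbw, hcu, hcw⟩ := hSw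
        refine ⟨?_, hcu, hbu⟩
        have : ¬ (w.2 ≤ (n : ℤ) - 1) := hnPw
        unfold Adj at hadj; omega
    obtain ⟨hu1, hcu, hbu⟩ := hu1
    obtain ⟨hRu, hgu⟩ := hct u hbu hcu hu
    refine ⟨true, b, u, hRb, hRu, hgb, hgu, ?_, fun _ => ⟨hjb, hu1⟩, by simp⟩
    refine Relation.ReflTransGen.mono ?_ _ _ hchP
    rintro p q ⟨⟨hadj, hbp, hbq, hcp, hcq⟩, hPp, hPq⟩
    obtain ⟨hRp, hgp⟩ := hct p hbp hcp hPp
    obtain ⟨hRq, hgq⟩ := hct q hbq hcq hPq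
    exact ⟨hadj, hRp, hRq, hgp, hgq⟩


open Metric Set

lemma precon_two {X : Type*} [TopologicalSpace X] {C t₁ t₂ : Set X}
    (hC : IsPreconnected C) (h1 : IsClosed t₁) (h2 : IsClosed t₂)
    (hcov : C ⊆ t₁ ∪ t₂) (hd : ∀ z ∈ C, ¬(z ∈ t₁ ∧ z ∈ t₂)) : C ⊆ t₁ ∨ C ⊆ t₂ := by
  by_contra h
  push_neg at h
  obtain ⟨⟨x₁, hx₁C, hx₁⟩, ⟨x₂, hx₂C, hx₂⟩⟩ : (∃ x ∈ C, x ∉ t₁) ∧ (∃ x ∈ C, x ∉ t₂) := by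
    constructor
    · rcases not_subset.mp h.1 with ⟨x, hx, hx'⟩; exact ⟨x, hx, hx'⟩
    · rcases not_subset.mp h.2 with ⟨x, hx, hx'⟩; exact ⟨x, hx, hx'⟩
  have := hC t₁ᶜ t₂ᶜ h1.isOpen_compl h2.isOpen_compl
    (fun z hz => by
      rcases Classical.em (z ∈ t₁) with h' | h'
      · exact Or.inr (fun hz2 => hd z hz ⟨h', hz2⟩)
      · exact Or.inl h')
    ⟨x₁, hx₁C, hx₁⟩ ⟨x₂, hx₂C, hx₂⟩
  obtain ⟨y, hyC, hy1, hy2⟩ := this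
  rcases hcov hyC with h' | h'
  · exact hy1 h'
  · exact hy2 h'

lemma precon_finset {X : Type*} [TopologicalSpace X] {C : Set X}
    (hC : IsPreconnected C) (s : Finset ℤ) (E : ℤ → Set X)
    (hcl : ∀ b, IsClosed (E b))
    (hdisj : ∀ b b' : ℤ, b ≠ b' → ∀ z ∈ C, ¬(z ∈ E b ∧ z ∈ E b'))
    (hcov : C ⊆ ⋃ b ∈ s, E b) : (∃ b, C ⊆ E b) ∨ C = ∅ := by
  classical
  induction s using Finset.induction_on with
  | empty =>
      simp only [Finset.notMem_empty, iUnion_of_empty, iUnion_empty] at hcov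
      exact Or.inr (subset_empty_iff.mp hcov)
  | insert b₀ s hb0 ih =>
      rw [Finset.set_biUnion_insert] at hcov
      have hd : ∀ z ∈ C, ¬(z ∈ E b₀ ∧ z ∈ ⋃ b ∈ s, E b) := by
        rintro z hz ⟨hz1, hz2⟩
        obtain ⟨b, hbmem, hzb⟩ := mem_iUnion₂.mp hz2
        exact hdisj b₀ b (fun he => hb0 (he ▸ hbmem)) z hz ⟨hz1, hzb⟩
      rcases precon_two hC (hcl b₀) (isClosed_biUnion_finset (fun b _ => hcl b)) hcov hd with h | h
      · exact Or.inl ⟨b₀, h⟩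
      · exact ih h

def Vq (K : Set (ℝ × ℝ)) (z : ℝ × ℝ) : Prop :=
  ∃ a b e : ℤ, e ≠ 0 ∧ z - ((a : ℝ), (b : ℝ)) ∈ K ∧ z - ((a : ℝ), (b : ℝ) + (e : ℝ)) ∈ K

def Hq (K : Set (ℝ × ℝ)) (z : ℝ × ℝ) : Prop :=
  ∃ a b e : ℤ, e ≠ 0 ∧ z - ((a : ℝ), (b : ℝ)) ∈ K ∧ z - ((a : ℝ) + (e : ℝ), (b : ℝ)) ∈ K

section WithK

variable {K : Set (ℝ × ℝ)} {M : ℝ}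

/-- abbreviation for the key axial fact -/
def KeyFact (K : Set (ℝ × ℝ)) : Prop :=
  ∀ (z : ℝ × ℝ) (a b a' b' : ℤ),
    z - ((a : ℝ), (b : ℝ)) ∈ K → z - ((a' : ℝ), (b' : ℝ)) ∈ K → a = a' ∨ b = b'

lemma disjVH (key : KeyFact K) (z : ℝ × ℝ) (hV : Vq K z) (hH : Hq K z) : False := by
  obtain ⟨a, b, e, he, hu, hu'⟩ := hV
  obtain ⟨a', b', f, hf, hw, hw'⟩ := hH
  have hu'' : z - ((a : ℝ), ((b + e : ℤ) : ℝ)) ∈ K := by push_cast; exact hu'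
  have hw'' : z - (((a' + f : ℤ) : ℝ), (b' : ℝ)) ∈ K := by push_cast; exact hw'
  have k1 := key z a b a' b' hu hw
  have k2 := key z a (b + e) a' b' hu'' hw
  have k3 := key z a (b + e) (a' + f) b' hu'' hw''
  have k4 := key z a b (a' + f) b' hu hw''
  omega

lemma sheetV (hKcl : IsClosed K) (hM1 : 1 ≤ M)
    (hKb : ∀ y ∈ K, |y.1| ≤ M ∧ |y.2| ≤ M)
    (hcov' : ∀ z : ℝ × ℝ, ∃ a b : ℤ, z - ((a : ℝ), (b : ℝ)) ∈ K)
    (key : KeyFact K)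
    {C : Set (ℝ × ℝ)} (hC : IsPreconnected C)
    (hCb : ∀ z ∈ C, |z.1| ≤ 2 * M + 2 ∧ |z.2| ≤ 2 * M + 2)
    (hCV : ∀ z ∈ C, ¬ Vq K z) {z z' : ℝ × ℝ} (hz : z ∈ C) (hz' : z' ∈ C) :
    |z.2 - z'.2| ≤ 2 * M := by
  classical
  obtain ⟨NZ, hNZ⟩ := exists_int_gt (3 * M + 2)
  set T : Finset ℤ := Finset.Icc (-NZ) NZ with hT
  set E : ℤ → Set (ℝ × ℝ) := fun b => ⋃ a ∈ T, {w | w - ((a : ℝ), (b : ℝ)) ∈ K} with hE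
  have hEcl : ∀ b, IsClosed (E b) := by
    intro b
    refine isClosed_biUnion_finset (fun a _ => ?_)
    exact IsClosed.preimage (continuous_sub_right _) hKcl
  have hmemE : ∀ (w : ℝ × ℝ) (b : ℤ), w ∈ E b → ∃ a : ℤ, w - ((a : ℝ), (b : ℝ)) ∈ K := by
    intro w b hw
    obtain ⟨a, _, ha⟩ := mem_iUnion₂.mp hw
    exact ⟨a, ha⟩
  have hbound : ∀ w ∈ C, ∀ (a b : ℤ), w - ((a : ℝ), (b : ℝ)) ∈ K →
      |(a : ℝ)| ≤ 3 * M + 2 ∧ |(b : ℝ)| ≤ 3 * M + 2 := by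
    intro w hw a b hmem
    obtain ⟨h1, h2⟩ := hKb _ hmem
    obtain ⟨h3, h4⟩ := hCb w hw
    simp only [Prod.fst_sub, Prod.snd_sub] at h1 h2
    constructor
    · have : |(a : ℝ)| ≤ |w.1| + |w.1 - a| := by
        have := abs_sub_abs_le_abs_sub (w.1) (w.1 - (a : ℝ))
        have h' : w.1 - (w.1 - (a : ℝ)) = (a : ℝ) := by ring
        calc |(a : ℝ)| = |w.1 - (w.1 - (a : ℝ))| := by rw [h']
        _ ≤ |w.1| + |w.1 - (a:ℝ)| := abs_sub (w.1) (w.1 - (a:ℝ))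
      linarith
    · have : |(b : ℝ)| ≤ |w.2| + |w.2 - b| := by
        have h' : w.2 - (w.2 - (b : ℝ)) = (b : ℝ) := by ring
        calc |(b : ℝ)| = |w.2 - (w.2 - (b : ℝ))| := by rw [h']
        _ ≤ |w.2| + |w.2 - (b:ℝ)| := abs_sub (w.2) (w.2 - (b:ℝ))
      linarith
  have hcovC : C ⊆ ⋃ b ∈ T, E b := by
    intro w hw
    obtain ⟨a, b, hmem⟩ := hcov' w
    obtain ⟨ha, hb⟩ := hbound w hw a b hmem
    have haT : a ∈ T := by
      rw [hT, Finset.mem_Icc]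
      have : |(a:ℝ)| ≤ (NZ : ℝ) := by linarith
      rw [← Int.cast_abs] at this
      have h'' : |a| ≤ NZ := by exact_mod_cast this
      rw [abs_le] at h''
      omega
    have hbT : b ∈ T := by
      rw [hT, Finset.mem_Icc]
      have : |(b:ℝ)| ≤ (NZ : ℝ) := by linarith
      rw [← Int.cast_abs] at this
      have h'' : |b| ≤ NZ := by exact_mod_cast this
      rw [abs_le] at h''
      omega
    exact mem_iUnion₂.mpr ⟨b, hbT, mem_iUnion₂.mpr ⟨a, haT, hmem⟩⟩
  have hdisj : ∀ b b' : ℤ, b ≠ b' → ∀ w ∈ C, ¬(w ∈ E b ∧ w ∈ E b') := by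
    rintro b b' hne w hw ⟨h1, h2⟩
    obtain ⟨a, ha⟩ := hmemE w b h1
    obtain ⟨a', ha'⟩ := hmemE w b' h2
    have := key w a b a' b' ha ha'
    have haa : a = a' := by omega
    subst haa
    refine hCV w hw ⟨a, b, b' - b, by omega, ha, ?_⟩
    have : ((b : ℝ) + ((b' - b : ℤ) : ℝ)) = (b' : ℝ) := by push_cast; ring
    rw [this]; exact ha'
  rcases precon_finset hC T E hEcl hdisj hcovC with ⟨b₀, hsub⟩ | hemp
  · obtain ⟨a, ha⟩ := hmemE z b₀ (hsub hz)
    obtain ⟨a', ha'⟩ := hmemE z' b₀ (hsub hz')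
    have h1 := (hKb _ ha).2
    have h2 := (hKb _ ha').2
    simp only [Prod.snd_sub] at h1 h2
    have e1 : |z.2 - (b₀:ℝ)| ≤ M := h1
    have e2 : |z'.2 - (b₀:ℝ)| ≤ M := h2
    rw [abs_le] at e1 e2 ⊢
    constructor <;> linarith
  · rw [hemp] at hz; exact absurd hz (notMem_empty z)

lemma sheetH (hKcl : IsClosed K) (hM1 : 1 ≤ M)
    (hKb : ∀ y ∈ K, |y.1| ≤ M ∧ |y.2| ≤ M)
    (hcov' : ∀ z : ℝ × ℝ, ∃ a b : ℤ, z - ((a : ℝ), (b : ℝ)) ∈ K)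
    (key : KeyFact K)
    {C : Set (ℝ × ℝ)} (hC : IsPreconnected C)
    (hCb : ∀ z ∈ C, |z.1| ≤ 2 * M + 2 ∧ |z.2| ≤ 2 * M + 2)
    (hCH : ∀ z ∈ C, ¬ Hq K z) {z z' : ℝ × ℝ} (hz : z ∈ C) (hz' : z' ∈ C) :
    |z.1 - z'.1| ≤ 2 * M := by
  classical
  obtain ⟨NZ, hNZ⟩ := exists_int_gt (3 * M + 2)
  set T : Finset ℤ := Finset.Icc (-NZ) NZ with hT
  set E : ℤ → Set (ℝ × ℝ) := fun a => ⋃ b ∈ T, {w | w - ((a : ℝ), (b : ℝ)) ∈ K} with hE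
  have hEcl : ∀ a, IsClosed (E a) := by
    intro a
    refine isClosed_biUnion_finset (fun b _ => ?_)
    exact IsClosed.preimage (continuous_sub_right _) hKcl
  have hmemE : ∀ (w : ℝ × ℝ) (a : ℤ), w ∈ E a → ∃ b : ℤ, w - ((a : ℝ), (b : ℝ)) ∈ K := by
    intro w a hw
    obtain ⟨b, _, hb⟩ := mem_iUnion₂.mp hw
    exact ⟨b, hb⟩
  have hbound : ∀ w ∈ C, ∀ (a b : ℤ), w - ((a : ℝ), (b : ℝ)) ∈ K →
      |(a : ℝ)| ≤ 3 * M + 2 ∧ |(b : ℝ)| ≤ 3 * M + 2 := by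
    intro w hw a b hmem
    obtain ⟨h1, h2⟩ := hKb _ hmem
    obtain ⟨h3, h4⟩ := hCb w hw
    simp only [Prod.fst_sub, Prod.snd_sub] at h1 h2
    constructor
    · have h' : w.1 - (w.1 - (a : ℝ)) = (a : ℝ) := by ring
      have : |(a : ℝ)| ≤ |w.1| + |w.1 - a| := by
        calc |(a : ℝ)| = |w.1 - (w.1 - (a : ℝ))| := by rw [h']
        _ ≤ |w.1| + |w.1 - (a:ℝ)| := abs_sub (w.1) (w.1 - (a:ℝ))
      linarith
    · have h' : w.2 - (w.2 - (b : ℝ)) = (b : ℝ) := by ring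
      have : |(b : ℝ)| ≤ |w.2| + |w.2 - b| := by
        calc |(b : ℝ)| = |w.2 - (w.2 - (b : ℝ))| := by rw [h']
        _ ≤ |w.2| + |w.2 - (b:ℝ)| := abs_sub (w.2) (w.2 - (b:ℝ))
      linarith
  have hcovC : C ⊆ ⋃ a ∈ T, E a := by
    intro w hw
    obtain ⟨a, b, hmem⟩ := hcov' w
    obtain ⟨ha, hb⟩ := hbound w hw a b hmem
    have haT : a ∈ T := by
      rw [hT, Finset.mem_Icc]
      have : |(a:ℝ)| ≤ (NZ : ℝ) := by linarith
      rw [← Int.cast_abs] at this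
      have h'' : |a| ≤ NZ := by exact_mod_cast this
      rw [abs_le] at h''
      omega
    have hbT : b ∈ T := by
      rw [hT, Finset.mem_Icc]
      have : |(b:ℝ)| ≤ (NZ : ℝ) := by linarith
      rw [← Int.cast_abs] at this
      have h'' : |b| ≤ NZ := by exact_mod_cast this
      rw [abs_le] at h''
      omega
    exact mem_iUnion₂.mpr ⟨a, haT, mem_iUnion₂.mpr ⟨b, hbT, hmem⟩⟩
  have hdisj : ∀ a a' : ℤ, a ≠ a' → ∀ w ∈ C, ¬(w ∈ E a ∧ w ∈ E a') := by
    rintro a a' hne w hw ⟨h1, h2⟩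
    obtain ⟨b, hb⟩ := hmemE w a h1
    obtain ⟨b', hb'⟩ := hmemE w a' h2
    have := key w a b a' b' hb hb'
    have hbb : b = b' := by omega
    subst hbb
    refine hCH w hw ⟨a, b, a' - a, by omega, hb, ?_⟩
    have : ((a : ℝ) + ((a' - a : ℤ) : ℝ)) = (a' : ℝ) := by push_cast; ring
    rw [this]; exact hb'
  rcases precon_finset hC T E hEcl hdisj hcovC with ⟨a₀, hsub⟩ | hemp
  · obtain ⟨b, hb⟩ := hmemE z a₀ (hsub hz)
    obtain ⟨b', hb'⟩ := hmemE z' a₀ (hsub hz')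
    have h1 := (hKb _ hb).1
    have h2 := (hKb _ hb').1
    simp only [Prod.fst_sub] at h1 h2
    have e1 : |z.1 - (a₀:ℝ)| ≤ M := h1
    have e2 : |z'.1 - (a₀:ℝ)| ≤ M := h2
    rw [abs_le] at e1 e2 ⊢
    constructor <;> linarith
  · rw [hemp] at hz; exact absurd hz (notMem_empty z)

end WithK

end NoCFD

open NoCFD Pointwise Metric Set

theorem no_compact_fundamental_domain_with_axial_differences :
    ¬ ∃ K : Set (ℝ × ℝ), IsCompact K ∧
      (∀ x : ℝ × ℝ, ∃ y ∈ K, ∃ a b : ℤ, x - y = ((a : ℝ), (b : ℝ))) ∧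
      (∀ p ∈ K - K, (∃ a b : ℤ, p = ((a : ℝ), (b : ℝ))) → p.1 = 0 ∨ p.2 = 0) := by
  classical
  rintro ⟨K, hKc, hcov, hax⟩
  have hKcl : IsClosed K := hKc.isClosed
  obtain ⟨r, hr⟩ := hKc.isBounded.subset_closedBall (0 : ℝ × ℝ)
  set M : ℝ := max r 1 with hM
  have hM1 : (1 : ℝ) ≤ M := le_max_right r 1
  have hM0 : (0 : ℝ) < M := lt_of_lt_of_le one_pos hM1
  have coordb : ∀ (z : ℝ × ℝ) (R : ℝ), dist z (0 : ℝ × ℝ) ≤ R → |z.1| ≤ R ∧ |z.2| ≤ R := by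
    intro z R h
    rw [Prod.dist_eq] at h
    constructor
    · have h' : dist z.1 (0 : ℝ × ℝ).1 ≤ R := le_trans (le_max_left _ _) h
      simpa [Real.dist_eq] using h'
    · have h' : dist z.2 (0 : ℝ × ℝ).2 ≤ R := le_trans (le_max_right _ _) h
      simpa [Real.dist_eq] using h'
  have hKb : ∀ y ∈ K, |y.1| ≤ M ∧ |y.2| ≤ M := by
    intro y hy
    have h := hr hy
    rw [Metric.mem_closedBall] at h
    obtain ⟨h1, h2⟩ := coordb y r h
    exact ⟨le_trans h1 (le_max_left r 1), le_trans h2 (le_max_left r 1)⟩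
  have hcov' : ∀ z : ℝ × ℝ, ∃ a b : ℤ, z - ((a : ℝ), (b : ℝ)) ∈ K := by
    intro z
    obtain ⟨y, hyK, a, b, hab⟩ := hcov z
    refine ⟨a, b, ?_⟩
    have e : z - ((a : ℝ), (b : ℝ)) = y := by rw [← hab]; abel
    rw [e]; exact hyK
  have key : KeyFact K := by
    intro z a b a' b' h1 h2
    have hmem : (z - ((a : ℝ), (b : ℝ))) - (z - ((a' : ℝ), (b' : ℝ))) ∈ K - K :=
      Set.sub_mem_sub h1 h2
    have heq : (z - ((a : ℝ), (b : ℝ))) - (z - ((a' : ℝ), (b' : ℝ)))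
        = (((a' - a : ℤ) : ℝ), ((b' - b : ℤ) : ℝ)) := by
      rw [Prod.ext_iff]
      constructor <;> simp only [Prod.fst_sub, Prod.snd_sub] <;> push_cast <;> ring
    rcases hax _ hmem ⟨a' - a, b' - b, heq⟩ with h | h
    · rw [heq] at h; simp only [Int.cast_sub] at h
      have : (a' : ℝ) = (a : ℝ) := by
        have : ((a' : ℝ) - a) = 0 := h
        linarith
      left; exact_mod_cast this.symm
    · rw [heq] at h; simp only [Int.cast_sub] at h
      have : (b' : ℝ) = (b : ℝ) := by
        have : ((b' : ℝ) - b) = 0 := h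
        linarith
      right; exact_mod_cast this.symm
  -- finite closed approximations of Vq and Hq inside the relevant square
  obtain ⟨NZ, hNZgt⟩ := exists_int_gt (6 * M + 6)
  have hNZ : 6 * M + 6 ≤ (NZ : ℝ) := le_of_lt hNZgt
  set T : Finset ℤ := Finset.Icc (-NZ) NZ with hT
  set TT : Finset (ℤ × ℤ × ℤ) := T ×ˢ T ×ˢ (T.erase 0) with hTT
  set VB : Set (ℝ × ℝ) := ⋃ t ∈ TT,
      ({z | z - ((t.1 : ℝ), (t.2.1 : ℝ)) ∈ K} ∩
       {z | z - ((t.1 : ℝ), (t.2.1 : ℝ) + (t.2.2 : ℝ)) ∈ K}) with hVB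
  set HB : Set (ℝ × ℝ) := ⋃ t ∈ TT,
      ({z | z - ((t.1 : ℝ), (t.2.1 : ℝ)) ∈ K} ∩
       {z | z - ((t.1 : ℝ) + (t.2.2 : ℝ), (t.2.1 : ℝ)) ∈ K}) with hHB
  have hVBcl : IsClosed VB :=
    isClosed_biUnion_finset (fun t _ =>
      (IsClosed.preimage (continuous_sub_right _) hKcl).inter
      (IsClosed.preimage (continuous_sub_right _) hKcl))
  have hHBcl : IsClosed HB :=
    isClosed_biUnion_finset (fun t _ =>
      (IsClosed.preimage (continuous_sub_right _) hKcl).inter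
      (IsClosed.preimage (continuous_sub_right _) hKcl))
  have hTTne : ∀ t ∈ TT, t.2.2 ≠ 0 := by
    intro t ht
    rw [hTT] at ht
    obtain ⟨_, h2⟩ := Finset.mem_product.mp ht
    obtain ⟨_, h3⟩ := Finset.mem_product.mp h2
    exact (Finset.mem_erase.mp h3).1
  have hVBsub : ∀ z ∈ VB, Vq K z := by
    intro z hz
    obtain ⟨t, htT, h1, h2⟩ := mem_iUnion₂.mp hz
    exact ⟨t.1, t.2.1, t.2.2, hTTne t htT, h1, h2⟩
  have hHBsub : ∀ z ∈ HB, Hq K z := by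
    intro z hz
    obtain ⟨t, htT, h1, h2⟩ := mem_iUnion₂.mp hz
    exact ⟨t.1, t.2.1, t.2.2, hTTne t htT, h1, h2⟩
  -- casting bounds helper
  have castT : ∀ x : ℤ, |(x : ℝ)| ≤ (NZ : ℝ) → x ∈ T := by
    intro x hx
    rw [hT, Finset.mem_Icc]
    rw [← Int.cast_abs] at hx
    have h'' : |x| ≤ NZ := by exact_mod_cast hx
    rw [abs_le] at h''
    omega
  have hVqVB : ∀ z : ℝ × ℝ, |z.1| ≤ 2 * M + 2 → |z.2| ≤ 2 * M + 2 → Vq K z → z ∈ VB := by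
    rintro z hz1 hz2 ⟨a, b, e, he, hm1, hm2⟩
    obtain ⟨B1, B2⟩ := hKb _ hm1
    obtain ⟨B3, B4⟩ := hKb _ hm2
    simp only [Prod.fst_sub, Prod.snd_sub] at B1 B2 B3 B4
    rw [abs_le] at B1 B2 B3 B4 hz1 hz2
    have ha : |(a : ℝ)| ≤ (NZ : ℝ) := by rw [abs_le]; constructor <;> linarith
    have hb : |(b : ℝ)| ≤ (NZ : ℝ) := by rw [abs_le]; constructor <;> linarith
    have hee : |(e : ℝ)| ≤ (NZ : ℝ) := by rw [abs_le]; constructor <;> linarith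
    have hTmem : (a, b, e) ∈ TT := by
      rw [hTT]
      refine Finset.mem_product.mpr ⟨castT a ha, Finset.mem_product.mpr ⟨castT b hb, ?_⟩⟩
      exact Finset.mem_erase.mpr ⟨he, castT e hee⟩
    exact mem_iUnion₂.mpr ⟨(a, b, e), hTmem, hm1, hm2⟩
  have hHqHB : ∀ z : ℝ × ℝ, |z.1| ≤ 2 * M + 2 → |z.2| ≤ 2 * M + 2 → Hq K z → z ∈ HB := by
    rintro z hz1 hz2 ⟨a, b, e, he, hm1, hm2⟩
    obtain ⟨B1, B2⟩ := hKb _ hm1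
    obtain ⟨B3, B4⟩ := hKb _ hm2
    simp only [Prod.fst_sub, Prod.snd_sub] at B1 B2 B3 B4
    rw [abs_le] at B1 B2 B3 B4 hz1 hz2
    have ha : |(a : ℝ)| ≤ (NZ : ℝ) := by rw [abs_le]; constructor <;> linarith
    have hb : |(b : ℝ)| ≤ (NZ : ℝ) := by rw [abs_le]; constructor <;> linarith
    have hee : |(e : ℝ)| ≤ (NZ : ℝ) := by rw [abs_le]; constructor <;> linarith
    have hTmem : (a, b, e) ∈ TT := by
      rw [hTT]
      refine Finset.mem_product.mpr ⟨castT a ha, Finset.mem_product.mpr ⟨castT b hb, ?_⟩⟩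
      exact Finset.mem_erase.mpr ⟨he, castT e hee⟩
    exact mem_iUnion₂.mpr ⟨(a, b, e), hTmem, hm1, hm2⟩
  -- vertical/horizontal segment contradictions if a whole strip is free of Vq / Hq
  have segV : ¬ (∀ z : ℝ × ℝ, |z.1| ≤ 2 * M + 2 → |z.2| ≤ 2 * M + 2 → ¬ Vq K z) := by
    intro hfree
    set C : Set (ℝ × ℝ) := segment ℝ ((0 : ℝ), (0 : ℝ)) ((0 : ℝ), 2 * M + 1) with hC
    have hCsub : C ⊆ Metric.closedBall (0 : ℝ × ℝ) (2 * M + 1) := by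
      apply (convex_closedBall _ _).segment_subset
      · have e0 : ((0 : ℝ), (0 : ℝ)) = (0 : ℝ × ℝ) := rfl
        rw [e0, Metric.mem_closedBall, dist_self]; linarith
      · rw [Metric.mem_closedBall, Prod.dist_eq]
        apply max_le
        · simp [Real.dist_eq]; linarith
        · simp [Real.dist_eq]; rw [abs_of_nonneg (by linarith : (0:ℝ) ≤ 2 * M + 1)]
    have hCb : ∀ z ∈ C, |z.1| ≤ 2 * M + 2 ∧ |z.2| ≤ 2 * M + 2 := by
      intro z hz
      obtain ⟨h1, h2⟩ := coordb z (2 * M + 1) (hCsub hz)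
      exact ⟨by linarith, by linarith⟩
    have hfin := sheetV hKcl hM1 hKb hcov' key (convex_segment _ _).isPreconnected hCb
      (fun z hz => hfree z (hCb z hz).1 (hCb z hz).2)
      (left_mem_segment ℝ _ _) (right_mem_segment ℝ _ _)
    simp only [zero_sub, abs_neg] at hfin
    rw [abs_of_nonneg (by linarith : (0:ℝ) ≤ 2 * M + 1)] at hfin
    linarith
  have segH : ¬ (∀ z : ℝ × ℝ, |z.1| ≤ 2 * M + 2 → |z.2| ≤ 2 * M + 2 → ¬ Hq K z) := by
    intro hfree
    set C : Set (ℝ × ℝ) := segment ℝ ((0 : ℝ), (0 : ℝ)) ((2 * M + 1 : ℝ), (0 : ℝ)) with hC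
    have hCsub : C ⊆ Metric.closedBall (0 : ℝ × ℝ) (2 * M + 1) := by
      apply (convex_closedBall _ _).segment_subset
      · have e0 : ((0 : ℝ), (0 : ℝ)) = (0 : ℝ × ℝ) := rfl
        rw [e0, Metric.mem_closedBall, dist_self]; linarith
      · rw [Metric.mem_closedBall, Prod.dist_eq]
        apply max_le
        · simp [Real.dist_eq]; rw [abs_of_nonneg (by linarith : (0:ℝ) ≤ 2 * M + 1)]
        · simp [Real.dist_eq]; linarith
    have hCb : ∀ z ∈ C, |z.1| ≤ 2 * M + 2 ∧ |z.2| ≤ 2 * M + 2 := by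
      intro z hz
      obtain ⟨h1, h2⟩ := coordb z (2 * M + 1) (hCsub hz)
      exact ⟨by linarith, by linarith⟩
    have hfin := sheetH hKcl hM1 hKb hcov' key (convex_segment _ _).isPreconnected hCb
      (fun z hz => hfree z (hCb z hz).1 (hCb z hz).2)
      (left_mem_segment ℝ _ _) (right_mem_segment ℝ _ _)
    simp only [zero_sub, abs_neg] at hfin
    rw [abs_of_nonneg (by linarith : (0:ℝ) ≤ 2 * M + 1)] at hfin
    linarith
  -- VB and HB are nonempty
  have hVBne : VB.Nonempty := by
    by_contra hne
    apply segV
    intro z h1 h2 hVq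
    exact hne ⟨z, hVqVB z h1 h2 hVq⟩
  have hHBne : HB.Nonempty := by
    by_contra hne
    apply segH
    intro z h1 h2 hHq
    exact hne ⟨z, hHqHB z h1 h2 hHq⟩
  -- minimum of the sum of distances over the big square
  set SQ : Set (ℝ × ℝ) := Metric.closedBall (0 : ℝ × ℝ) (2 * M + 2) with hSQ
  have hSQc : IsCompact SQ := isCompact_closedBall _ _
  have hSQne : SQ.Nonempty := ⟨0, by rw [hSQ, Metric.mem_closedBall, dist_self]; linarith⟩
  set F : ℝ × ℝ → ℝ := fun x => Metric.infDist x VB + Metric.infDist x HB with hF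
  have hFc : ContinuousOn F SQ :=
    ((Metric.continuous_infDist_pt VB).add (Metric.continuous_infDist_pt HB)).continuousOn
  obtain ⟨x₀, hx₀SQ, hx₀min⟩ := hSQc.exists_isMinOn hSQne hFc
  obtain ⟨μ, hμdef⟩ : ∃ w : ℝ, w = F x₀ := ⟨_, rfl⟩
  have hμmin : ∀ x ∈ SQ, μ ≤ Metric.infDist x VB + Metric.infDist x HB := by
    intro x hx
    have := isMinOn_iff.mp hx₀min x hx
    rw [hμdef]
    simpa [hF] using this
  have hμpos : 0 < μ := by
    rcases lt_or_ge 0 μ with h | h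
    · exact h
    · exfalso
      have h1 : 0 ≤ Metric.infDist x₀ VB := Metric.infDist_nonneg
      have h2 : 0 ≤ Metric.infDist x₀ HB := Metric.infDist_nonneg
      have hsum : Metric.infDist x₀ VB + Metric.infDist x₀ HB ≤ 0 := by
        have h' : F x₀ ≤ 0 := by rw [← hμdef]; exact h
        simpa [hF] using h'
      have e1 : Metric.infDist x₀ VB = 0 := by linarith
      have e2 : Metric.infDist x₀ HB = 0 := by linarith
      have m1 : x₀ ∈ VB := (hVBcl.mem_iff_infDist_zero hVBne).mpr e1
      have m2 : x₀ ∈ HB := (hHBcl.mem_iff_infDist_zero hHBne).mpr e2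
      exact disjVH key x₀ (hVBsub _ m1) (hHBsub _ m2)
  obtain ⟨δ, hδdef⟩ : ∃ w : ℝ, w = min (μ / 2) 1 := ⟨_, rfl⟩
  have hδpos : 0 < δ := by rw [hδdef]; exact lt_min (half_pos hμpos) one_pos
  have hδ1 : δ ≤ 1 := by rw [hδdef]; exact min_le_right _ _
  have hδμ : δ ≤ μ / 2 := by rw [hδdef]; exact min_le_left _ _
  obtain ⟨ε, hεdef⟩ : ∃ w : ℝ, w = δ / 2 := ⟨_, rfl⟩
  have hεpos : 0 < ε := by rw [hεdef]; linarith
  have hεδ : ε < δ := by rw [hεdef]; linarith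
  have hε1 : ε ≤ 1 := by rw [hεdef]; linarith
  -- grid size
  obtain ⟨n, hn⟩ : ∃ n : ℕ, n = Nat.floor (2 * M / ε) + 2 := ⟨_, rfl⟩
  have hn1 : 1 ≤ n := by omega
  have hn2 : 2 ≤ n := by omega
  have hncast : (2 : ℝ) ≤ (n : ℝ) := by exact_mod_cast hn2
  have hfl : ((n : ℝ) - 1) = (Nat.floor (2 * M / ε) : ℝ) + 1 := by rw [hn]; push_cast; ring
  have hgrow : 2 * M < ((n : ℝ) - 1) * ε := by
    have h1 : 2 * M / ε < (Nat.floor (2 * M / ε) : ℝ) + 1 := Nat.lt_floor_add_one _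
    rw [hfl]
    have h3 := mul_lt_mul_of_pos_right h1 hεpos
    calc 2 * M = (2 * M / ε) * ε := by field_simp
    _ < ((Nat.floor (2 * M / ε) : ℝ) + 1) * ε := h3
  have hsmall : ((n : ℝ) - 1) * ε ≤ 2 * M + 1 := by
    have h0 : (Nat.floor (2 * M / ε) : ℝ) ≤ 2 * M / ε := Nat.floor_le (by positivity)
    rw [hfl]
    have h3 : ((Nat.floor (2 * M / ε) : ℝ) + 1) * ε ≤ (2 * M / ε + 1) * ε := by
      apply mul_le_mul_of_nonneg_right _ (le_of_lt hεpos); linarith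
    calc ((Nat.floor (2 * M / ε) : ℝ) + 1) * ε ≤ (2 * M / ε + 1) * ε := h3
    _ = 2 * M + ε := by field_simp
    _ ≤ 2 * M + 1 := by linarith
  set p : ℤ × ℤ → ℝ × ℝ := fun q => (ε * q.1, ε * q.2) with hp
  have hpRh : ∀ q : ℤ × ℤ, Rh n q → |(p q).1| ≤ 2 * M + 1 ∧ |(p q).2| ≤ 2 * M + 1 := by
    intro q hq
    obtain ⟨h1, h2, h3, h4⟩ := hq
    have c1 : (0 : ℝ) ≤ (q.1 : ℝ) := by exact_mod_cast h1
    have c2 : (q.1 : ℝ) ≤ (n : ℝ) - 1 := by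
      have hh : ((q.1 : ℤ) : ℝ) ≤ (((n : ℤ) - 1 : ℤ) : ℝ) := by exact_mod_cast h2
      push_cast at hh; linarith
    have c3 : (0 : ℝ) ≤ (q.2 : ℝ) := by exact_mod_cast h3
    have c4 : (q.2 : ℝ) ≤ (n : ℝ) - 1 := by
      have hh : ((q.2 : ℤ) : ℝ) ≤ (((n : ℤ) - 1 : ℤ) : ℝ) := by exact_mod_cast h4
      push_cast at hh; linarith
    constructor
    · have e : (p q).1 = ε * (q.1 : ℝ) := rfl
      rw [e, abs_of_nonneg (mul_nonneg hεpos.le c1)]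
      calc ε * (q.1 : ℝ) ≤ ε * ((n : ℝ) - 1) := mul_le_mul_of_nonneg_left c2 hεpos.le
      _ = ((n : ℝ) - 1) * ε := mul_comm _ _
      _ ≤ 2 * M + 1 := hsmall
    · have e : (p q).2 = ε * (q.2 : ℝ) := rfl
      rw [e, abs_of_nonneg (mul_nonneg hεpos.le c3)]
      calc ε * (q.2 : ℝ) ≤ ε * ((n : ℝ) - 1) := mul_le_mul_of_nonneg_left c4 hεpos.le
      _ = ((n : ℝ) - 1) * ε := mul_comm _ _
      _ ≤ 2 * M + 1 := hsmall
  have hpSQ : ∀ q : ℤ × ℤ, Rh n q → p q ∈ SQ := by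
    intro q hq
    obtain ⟨h1, h2⟩ := hpRh q hq
    rw [hSQ, Metric.mem_closedBall, Prod.dist_eq]
    apply max_le
    · have e : dist (p q).1 (0 : ℝ × ℝ).1 = |(p q).1| := by simp [Real.dist_eq, abs_mul]
      rw [e]; linarith
    · have e : dist (p q).2 (0 : ℝ × ℝ).2 = |(p q).2| := by simp [Real.dist_eq, abs_mul]
      rw [e]; linarith
  -- the coloring
  set g : ℤ × ℤ → Bool := fun q => if δ ≤ Metric.infDist (p q) VB then true else false with hg
  -- points near a grid point inherit bounds
  have hnearb : ∀ q : ℤ × ℤ, Rh n q → ∀ z : ℝ × ℝ, dist z (p q) ≤ ε →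
      |z.1| ≤ 2 * M + 2 ∧ |z.2| ≤ 2 * M + 2 := by
    intro q hq z hz
    obtain ⟨h1, h2⟩ := hpRh q hq
    have d1 : dist z.1 (p q).1 ≤ dist z (p q) := by rw [Prod.dist_eq]; exact le_max_left _ _
    have d2 : dist z.2 (p q).2 ≤ dist z (p q) := by rw [Prod.dist_eq]; exact le_max_right _ _
    rw [Real.dist_eq] at d1 d2
    constructor
    · have : |z.1| ≤ |z.1 - (p q).1| + |(p q).1| := by
        have e : z.1 = (z.1 - (p q).1) + (p q).1 := by ring
        calc |z.1| = |(z.1 - (p q).1) + (p q).1| := by rw [← e]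
        _ ≤ |z.1 - (p q).1| + |(p q).1| := abs_add_le _ _
      linarith
    · have : |z.2| ≤ |z.2 - (p q).2| + |(p q).2| := by
        have e : z.2 = (z.2 - (p q).2) + (p q).2 := by ring
        calc |z.2| = |(z.2 - (p q).2) + (p q).2| := by rw [← e]
        _ ≤ |z.2 - (p q).2| + |(p q).2| := abs_add_le _ _
      linarith
  have hgT : ∀ q : ℤ × ℤ, Rh n q → g q = true → ∀ z : ℝ × ℝ, dist z (p q) ≤ ε →
      (|z.1| ≤ 2 * M + 2 ∧ |z.2| ≤ 2 * M + 2) ∧ ¬ Vq K z := by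
    intro q hq hgq z hz
    have hd : δ ≤ Metric.infDist (p q) VB := by
      by_contra h
      rw [hg] at hgq; simp only [if_neg h] at hgq
      exact Bool.false_ne_true hgq
    have hb := hnearb q hq z hz
    refine ⟨hb, fun hVq => ?_⟩
    have hmem : z ∈ VB := hVqVB z hb.1 hb.2 hVq
    have hle : Metric.infDist (p q) VB ≤ dist (p q) z := Metric.infDist_le_dist_of_mem hmem
    rw [dist_comm] at hle
    linarith
  have hgF : ∀ q : ℤ × ℤ, Rh n q → g q = false → ∀ z : ℝ × ℝ, dist z (p q) ≤ ε →
      (|z.1| ≤ 2 * M + 2 ∧ |z.2| ≤ 2 * M + 2) ∧ ¬ Hq K z := by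
    intro q hq hgq z hz
    have hd : Metric.infDist (p q) VB < δ := by
      by_contra h
      push_neg at h
      rw [hg] at hgq; simp only [if_pos h] at hgq
      exact Bool.false_ne_true hgq.symm
    have hdH : δ ≤ Metric.infDist (p q) HB := by
      have hsum : μ ≤ Metric.infDist (p q) VB + Metric.infDist (p q) HB :=
        hμmin (p q) (hpSQ q hq)
      linarith
    have hb := hnearb q hq z hz
    refine ⟨hb, fun hHq => ?_⟩
    have hmem : z ∈ HB := hHqHB z hb.1 hb.2 hHq
    have hle : Metric.infDist (p q) HB ≤ dist (p q) z := Metric.infDist_le_dist_of_mem hmem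
    rw [dist_comm] at hle
    linarith
  have adjdist : ∀ q q' : ℤ × ℤ, Adj q q' → dist (p q) (p q') ≤ ε := by
    intro q q' hadj
    have hb : q'.1 - q.1 ≤ 1 ∧ q.1 - q'.1 ≤ 1 ∧ q'.2 - q.2 ≤ 1 ∧ q.2 - q'.2 ≤ 1 := by
      unfold Adj at hadj; omega
    have habs1 : |(q.1 : ℝ) - (q'.1 : ℝ)| ≤ 1 := by
      rw [abs_le]
      constructor
      · have : (-1 : ℤ) ≤ q.1 - q'.1 := by omega
        have hh : ((-1 : ℤ) : ℝ) ≤ ((q.1 - q'.1 : ℤ) : ℝ) := by exact_mod_cast this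
        push_cast at hh; linarith
      · have : (q.1 - q'.1 : ℤ) ≤ 1 := by omega
        have hh : ((q.1 - q'.1 : ℤ) : ℝ) ≤ ((1 : ℤ) : ℝ) := by exact_mod_cast this
        push_cast at hh; linarith
    have habs2 : |(q.2 : ℝ) - (q'.2 : ℝ)| ≤ 1 := by
      rw [abs_le]
      constructor
      · have : (-1 : ℤ) ≤ q.2 - q'.2 := by omega
        have hh : ((-1 : ℤ) : ℝ) ≤ ((q.2 - q'.2 : ℤ) : ℝ) := by exact_mod_cast this
        push_cast at hh; linarith
      · have : (q.2 - q'.2 : ℤ) ≤ 1 := by omega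
        have hh : ((q.2 - q'.2 : ℤ) : ℝ) ≤ ((1 : ℤ) : ℝ) := by exact_mod_cast this
        push_cast at hh; linarith
    rw [Prod.dist_eq]
    apply max_le
    · have e1 : (p q).1 = ε * (q.1 : ℝ) := rfl
      have e2 : (p q').1 = ε * (q'.1 : ℝ) := rfl
      rw [e1, e2, Real.dist_eq]
      have e : ε * (q.1 : ℝ) - ε * (q'.1 : ℝ) = ε * ((q.1 : ℝ) - q'.1) := by ring
      rw [e, abs_mul, abs_of_nonneg hεpos.le]
      calc ε * |(q.1 : ℝ) - (q'.1 : ℝ)| ≤ ε * 1 := mul_le_mul_of_nonneg_left habs1 hεpos.le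
      _ = ε := mul_one ε
    · have e1 : (p q).2 = ε * (q.2 : ℝ) := rfl
      have e2 : (p q').2 = ε * (q'.2 : ℝ) := rfl
      rw [e1, e2, Real.dist_eq]
      have e : ε * (q.2 : ℝ) - ε * (q'.2 : ℝ) = ε * ((q.2 : ℝ) - q'.2) := by ring
      rw [e, abs_mul, abs_of_nonneg hεpos.le]
      calc ε * |(q.2 : ℝ) - (q'.2 : ℝ)| ≤ ε * 1 := mul_le_mul_of_nonneg_left habs2 hεpos.le
      _ = ε := mul_one ε
  -- from a chain of cells we get a preconnected set of good points
  have buildC : ∀ (v : Bool) (good : ℝ × ℝ → Prop),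
      (∀ q : ℤ × ℤ, Rh n q → g q = v → ∀ z : ℝ × ℝ, dist z (p q) ≤ ε → good z) →
      ∀ {a u : ℤ × ℤ}, Relation.ReflTransGen (RStep n g v) a u →
      Rh n a → g a = v →
      ∃ C : Set (ℝ × ℝ), IsPreconnected C ∧ p a ∈ C ∧ p u ∈ C ∧ ∀ z ∈ C, good z := by
    intro v good hgood a u hch ha hga
    induction hch with
    | refl =>
        refine ⟨{p a}, isPreconnected_singleton, Set.mem_singleton _, Set.mem_singleton _, ?_⟩
        intro z hz
        rw [Set.mem_singleton_iff] at hz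
        subst hz
        exact hgood a ha hga _ (by rw [dist_self]; exact hεpos.le)
    | @tail w u' hch1 hst ih =>
        obtain ⟨C, hCpre, hpa, hpw, hgoodC⟩ := ih
        obtain ⟨hadj, hRw, hRu', hgw, hgu'⟩ := hst
        refine ⟨C ∪ segment ℝ (p w) (p u'), ?_, Or.inl hpa, Or.inr (right_mem_segment ℝ _ _), ?_⟩
        · exact IsPreconnected.union (p w) hpw (left_mem_segment ℝ _ _) hCpre
            (convex_segment _ _).isPreconnected
        · rintro z (hz | hz)
          · exact hgoodC z hz
          · have hsub : segment ℝ (p w) (p u') ⊆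
                Metric.closedBall (p w) (dist (p w) (p u')) := by
              apply (convex_closedBall _ _).segment_subset
              · rw [Metric.mem_closedBall, dist_self]; exact dist_nonneg
              · rw [Metric.mem_closedBall, dist_comm]
            have hdz : dist z (p w) ≤ dist (p w) (p u') := by
              have := hsub hz; rwa [Metric.mem_closedBall] at this
            exact hgood w hRw hgw z (le_trans hdz (adjdist w u' hadj))
  -- apply the discrete crossing theorem
  obtain ⟨v, aa, uu, hRa, hRu, hgaa, hguu, hchain, htv, hfv⟩ := rhombus n hn1 g
  have hnn1 : (0 : ℝ) ≤ (n : ℝ) - 1 := by linarith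
  cases v
  · -- v = false : a horizontal crossing avoiding Hq, contradicting sheetH
    obtain ⟨ha1, hu1⟩ := hfv rfl
    obtain ⟨C, hCpre, hpa, hpu, hgood⟩ := buildC false
      (fun z => (|z.1| ≤ 2 * M + 2 ∧ |z.2| ≤ 2 * M + 2) ∧ ¬ Hq K z) hgF hchain hRa hgaa
    have hfin := sheetH hKcl hM1 hKb hcov' key hCpre (fun z hz => (hgood z hz).1)
      (fun z hz => (hgood z hz).2) hpa hpu
    have e1 : (p aa).1 = 0 := by
      have e : (p aa).1 = ε * (aa.1 : ℝ) := rfl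
      rw [e, ha1]; simp
    have e2 : (p uu).1 = ε * ((n : ℝ) - 1) := by
      have e : (p uu).1 = ε * (uu.1 : ℝ) := rfl
      rw [e, hu1]; push_cast; ring
    rw [e1, e2, zero_sub, abs_neg, abs_of_nonneg (mul_nonneg hεpos.le hnn1)] at hfin
    have := hgrow
    nlinarith
  · -- v = true : a vertical crossing avoiding Vq, contradicting sheetV
    obtain ⟨ha2, hu2⟩ := htv rfl
    obtain ⟨C, hCpre, hpa, hpu, hgood⟩ := buildC true
      (fun z => (|z.1| ≤ 2 * M + 2 ∧ |z.2| ≤ 2 * M + 2) ∧ ¬ Vq K z) hgT hchain hRa hgaa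
    have hfin := sheetV hKcl hM1 hKb hcov' key hCpre (fun z hz => (hgood z hz).1)
      (fun z hz => (hgood z hz).2) hpa hpu
    have e1 : (p aa).2 = 0 := by
      have e : (p aa).2 = ε * (aa.2 : ℝ) := rfl
      rw [e, ha2]; simp
    have e2 : (p uu).2 = ε * ((n : ℝ) - 1) := by
      have e : (p uu).2 = ε * (uu.2 : ℝ) := rfl
      rw [e, hu2]; push_cast; ring
    rw [e1, e2, zero_sub, abs_neg, abs_of_nonneg (mul_nonneg hεpos.le hnn1)] at hfin
    have := hgrow
    nlinarith
end

section
/- The set A = {(−1,0), (0,−1), (0,0), (1,0), (0,1)} ⊆ ℤ², although finite, symmetric, containing 0, and generating ℤ² as a group, is not of the form (K − K) ∩ ℤ² for any compact K ⊆ ℝ² with K + ℤ² = ℝ². -/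
open Pointwise Finset

/-- The set `{(−1,0), (0,−1), (0,0), (1,0), (0,1)} ⊆ ℤ²`. -/
def plusSet : Set (ℤ × ℤ) := {(-1, 0), (0, -1), (0, 0), (1, 0), (0, 1)}

lemma plusSet_iff (d : ℤ × ℤ) : d ∈ plusSet ↔ (d.1.natAbs + d.2.natAbs ≤ 1) := by
  obtain ⟨x, y⟩ := d
  simp [plusSet, Prod.ext_iff]
  omega

def tauP (v : ℤ × ℤ) : ZMod 2 := if 1 ≤ v.2 then 1 else 0

def crossP (v w : ℤ × ℤ) : ZMod 2 :=
  if 1 ≤ v.1 ∧ 1 ≤ w.1 then tauP v + tauP w else 0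

lemma zmod2_add_self : ∀ x : ZMod 2, x + x = 0 := by decide

lemma crossP_zero (u w z : ℤ × ℤ)
    (hzu : (u.1 - z.1).natAbs + (u.2 - z.2).natAbs ≤ 1)
    (hzw : (w.1 - z.1).natAbs + (w.2 - z.2).natAbs ≤ 1)
    (hz : z.1 ≤ 0) : crossP u w = 0 := by
  unfold crossP
  split_ifs with h
  · have h22 : u.2 = w.2 := by omega
    unfold tauP
    rw [h22]
    exact zmod2_add_self _
  · rfl

lemma crossP_tau_eq {u w : ℤ × ℤ} (h : tauP u = tauP w) : crossP u w = 0 := by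
  unfold crossP
  split_ifs
  · rw [h]; exact zmod2_add_self _
  · rfl

set_option maxHeartbeats 2000000 in
lemma cell_lemma (a b c d : ℤ × ℤ)
    (hab : (b.1 - a.1).natAbs + (b.2 - a.2).natAbs ≤ 1)
    (hac : (c.1 - a.1).natAbs + (c.2 - a.2).natAbs ≤ 1)
    (had : (d.1 - a.1).natAbs + (d.2 - a.2).natAbs ≤ 1)
    (hbc : (c.1 - b.1).natAbs + (c.2 - b.2).natAbs ≤ 1)
    (hbd : (d.1 - b.1).natAbs + (d.2 - b.2).natAbs ≤ 1)
    (hcd : (d.1 - c.1).natAbs + (d.2 - c.2).natAbs ≤ 1) :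
    crossP a b + crossP c d + crossP a c + crossP b d = 0 := by
  by_cases h : 1 ≤ a.1 ∧ 1 ≤ b.1 ∧ 1 ≤ c.1 ∧ 1 ≤ d.1
  · obtain ⟨h1, h2, h3, h4⟩ := h
    simp only [crossP, if_pos (And.intro h1 h2), if_pos (And.intro h3 h4),
      if_pos (And.intro h1 h3), if_pos (And.intro h2 h4)]
    exact (by decide : ∀ w x y z : ZMod 2, (w+x)+(y+z)+(w+y)+(x+z) = 0) _ _ _ _
  · push_neg at h
    have hz : a.1 ≤ 0 ∨ b.1 ≤ 0 ∨ c.1 ≤ 0 ∨ d.1 ≤ 0 := by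
      by_cases h1 : 1 ≤ a.1
      · by_cases h2 : 1 ≤ b.1
        · by_cases h3 : 1 ≤ c.1
          · right; right; right; omega
          · right; right; left; omega
        · right; left; omega
      · left; omega
    have e1 : crossP a b = 0 := by
      rcases hz with hz|hz|hz|hz
      · exact crossP_zero a b a (by omega) (by omega) hz
      · exact crossP_zero a b b (by omega) (by omega) hz
      · exact crossP_zero a b c (by omega) (by omega) hz
      · exact crossP_zero a b d (by omega) (by omega) hz
    have e2 : crossP c d = 0 := by
      rcases hz with hz|hz|hz|hz
      · exact crossP_zero c d a (by omega) (by omega) hz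
      · exact crossP_zero c d b (by omega) (by omega) hz
      · exact crossP_zero c d c (by omega) (by omega) hz
      · exact crossP_zero c d d (by omega) (by omega) hz
    have e3 : crossP a c = 0 := by
      rcases hz with hz|hz|hz|hz
      · exact crossP_zero a c a (by omega) (by omega) hz
      · exact crossP_zero a c b (by omega) (by omega) hz
      · exact crossP_zero a c c (by omega) (by omega) hz
      · exact crossP_zero a c d (by omega) (by omega) hz
    have e4 : crossP b d = 0 := by
      rcases hz with hz|hz|hz|hz
      · exact crossP_zero b d a (by omega) (by omega) hz
      · exact crossP_zero b d b (by omega) (by omega) hz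
      · exact crossP_zero b d c (by omega) (by omega) hz
      · exact crossP_zero b d d (by omega) (by omega) hz
    rw [e1, e2, e3, e4]; rfl

lemma tele (g : ℕ → ZMod 2) (N : ℕ) :
    (∑ j ∈ Finset.range N, (g j + g (j+1))) = g 0 + g N := by
  induction N with
  | zero => simp [zmod2_add_self]
  | succ n ih =>
      rw [Finset.sum_range_succ, ih]
      have := zmod2_add_self (g n)
      linear_combination this

theorem plusSet_not_difference_set :
    plusSet.Finite ∧ -plusSet = plusSet ∧ (0, 0) ∈ plusSet ∧
      AddSubgroup.closure plusSet = ⊤ ∧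
      ¬ ∃ K : Set (ℝ × ℝ), IsCompact K ∧
        (∀ x : ℝ × ℝ, ∃ y ∈ K, ∃ a b : ℤ, x - y = ((a : ℝ), (b : ℝ))) ∧
        (∀ p : ℤ × ℤ, p ∈ plusSet ↔ ((p.1 : ℝ), (p.2 : ℝ)) ∈ K - K) := by
  refine ⟨?_, ?_, ?_, ?_, ?_⟩
  · unfold plusSet
    exact (((((Set.finite_singleton _).insert _).insert _).insert _).insert _)
  · ext ⟨u, v⟩
    simp only [Set.mem_neg, plusSet, Set.mem_insert_iff, Set.mem_singleton_iff, Prod.ext_iff,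
      Prod.fst_neg, Prod.snd_neg, Prod.fst, Prod.snd]
    constructor <;> intro h <;> omega
  · simp [plusSet]
  · rw [AddSubgroup.eq_top_iff']
    rintro ⟨u, v⟩
    have h1 : ((1, 0) : ℤ × ℤ) ∈ AddSubgroup.closure plusSet :=
      AddSubgroup.subset_closure (by simp [plusSet])
    have h2 : ((0, 1) : ℤ × ℤ) ∈ AddSubgroup.closure plusSet :=
      AddSubgroup.subset_closure (by simp [plusSet])
    have he : ((u, v) : ℤ × ℤ) = u • ((1, 0) : ℤ × ℤ) + v • ((0, 1) : ℤ × ℤ) := by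
      simp [Prod.ext_iff]
    rw [he]
    exact AddSubgroup.add_mem _ (AddSubgroup.zsmul_mem _ h1 u) (AddSubgroup.zsmul_mem _ h2 v)
  · rintro ⟨K, hK, hcov, hdiff⟩
    classical
    set ι : ℤ × ℤ → ℝ × ℝ := fun d => ((d.1 : ℝ), (d.2 : ℝ)) with hι
    have hι_sub : ∀ v w : ℤ × ℤ, ι (w - v) = ι w - ι v := by
      intro v w
      simp [hι, Prod.ext_iff]
    -- nonempty, compact difference set
    obtain ⟨y₀, hy₀, -⟩ := hcov 0
    have hKKne : (K - K).Nonempty := ⟨y₀ - y₀, Set.sub_mem_sub hy₀ hy₀⟩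
    have hKKc : IsCompact (K - K) := by
      rw [sub_eq_add_neg]; exact hK.add hK.neg
    have hKKcl : IsClosed (K - K) := hKKc.isClosed
    -- bound C
    obtain ⟨C₀, hC₀⟩ := hK.isBounded.subset_closedBall 0
    set C : ℝ := max C₀ 1 with hC
    have hCK : K ⊆ Metric.closedBall 0 C :=
      hC₀.trans (Metric.closedBall_subset_closedBall (le_max_left _ _))
    have hC1 : (1 : ℝ) ≤ C := le_max_right _ _
    have hbound : ∀ (x : ℝ × ℝ) (v : ℤ × ℤ), x - ι v ∈ K →
        |x.1 - (v.1 : ℝ)| ≤ C ∧ |x.2 - (v.2 : ℝ)| ≤ C := by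
      intro x v hx
      have hb := hCK hx
      rw [Metric.mem_closedBall, dist_zero_right] at hb
      constructor
      · have := (norm_fst_le (x - ι v)).trans hb
        simpa [Real.norm_eq_abs, hι] using this
      · have := (norm_snd_le (x - ι v)).trans hb
        simpa [Real.norm_eq_abs, hι] using this
    -- δ
    set M : ℤ := ⌈(2 * C + 2 : ℝ)⌉ with hM
    have hMR : (2 * C + 1 : ℝ) ≤ (M : ℝ) := le_trans (by linarith) (Int.le_ceil _)
    have hM0 : 0 ≤ M := by
      have : (0 : ℝ) ≤ (M : ℝ) := le_trans (by linarith) hMR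
      exact_mod_cast this
    set F : Finset (ℤ × ℤ) := Finset.Icc (-M, -M) (M, M) with hF
    have hFne : F.Nonempty := by
      refine ⟨0, ?_⟩
      rw [hF, Finset.mem_Icc]
      constructor <;> (rw [Prod.le_def]; constructor <;> simp <;> omega)
    obtain ⟨δ, hδpos, hδ1, hδlow⟩ :
        ∃ δ : ℝ, 0 < δ ∧ δ ≤ 1 ∧
          ∀ d ∈ F, ι d ∉ K - K → δ ≤ Metric.infDist (ι d) (K - K) := by
      refine ⟨min (F.inf' hFne
        (fun d => if (ι d) ∈ K - K then 1 else Metric.infDist (ι d) (K - K))) 1,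
        ?_, min_le_right _ _, ?_⟩
      · refine lt_min ?_ one_pos
        rw [Finset.lt_inf'_iff]
        intro d hd
        show (0 : ℝ) < if (ι d) ∈ K - K then 1 else Metric.infDist (ι d) (K - K)
        split_ifs with h
        · norm_num
        · exact ((hKKcl.notMem_iff_infDist_pos hKKne).1 h)
      · intro d hd hni
        have h2 := Finset.inf'_le
          (fun d => if (ι d) ∈ K - K then 1 else Metric.infDist (ι d) (K - K)) hd
        have h1 := le_trans (min_le_left (F.inf' hFne
          (fun d => if (ι d) ∈ K - K then 1 else Metric.infDist (ι d) (K - K))) 1) h2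
        simpa [if_neg hni] using h1
    -- key adjacency lemma
    have key : ∀ (v w : ℤ × ℤ) (x x' : ℝ × ℝ), x - ι v ∈ K → x' - ι w ∈ K →
        dist x x' < δ → (w - v) ∈ plusSet := by
      intro v w x x' hxv hxw hdist
      by_contra hnot
      obtain ⟨hb1, hb2⟩ := hbound x v hxv
      obtain ⟨hb1', hb2'⟩ := hbound x' w hxw
      have hd1 : |x.1 - x'.1| ≤ dist x x' := by
        rw [Prod.dist_eq]
        exact le_max_of_le_left (le_of_eq (Real.dist_eq _ _).symm)
      have hd2 : |x.2 - x'.2| ≤ dist x x' := by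
        rw [Prod.dist_eq]
        exact le_max_of_le_right (le_of_eq (Real.dist_eq _ _).symm)
      have hdistle : dist x x' ≤ 1 := le_trans hdist.le hδ1
      have hmem : (w - v) ∈ F := by
        have e1 : |((w.1 : ℝ) - (v.1 : ℝ))| ≤ 2 * C + 1 := by
          have t1 : |(w.1 : ℝ) - (v.1 : ℝ)| ≤ |(w.1 : ℝ) - x'.1| + |x'.1 - x.1| + |x.1 - (v.1:ℝ)| := by
            calc |(w.1 : ℝ) - (v.1 : ℝ)| ≤ |(w.1:ℝ) - x.1| + |x.1 - (v.1:ℝ)| := abs_sub_le _ _ _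
            _ ≤ (|(w.1:ℝ) - x'.1| + |x'.1 - x.1|) + |x.1 - (v.1:ℝ)| := by
                have := abs_sub_le ((w.1:ℝ)) x'.1 x.1
                linarith
          have r1 : |(w.1 : ℝ) - x'.1| ≤ C := by rw [abs_sub_comm]; exact hb1'
          have r2 : |x'.1 - x.1| ≤ 1 := by
            rw [abs_sub_comm]; exact le_trans hd1 hdistle
          linarith
        have e2 : |((w.2 : ℝ) - (v.2 : ℝ))| ≤ 2 * C + 1 := by
          have t1 : |(w.2 : ℝ) - (v.2 : ℝ)| ≤ |(w.2 : ℝ) - x'.2| + |x'.2 - x.2| + |x.2 - (v.2:ℝ)| := by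
            calc |(w.2 : ℝ) - (v.2 : ℝ)| ≤ |(w.2:ℝ) - x.2| + |x.2 - (v.2:ℝ)| := abs_sub_le _ _ _
            _ ≤ (|(w.2:ℝ) - x'.2| + |x'.2 - x.2|) + |x.2 - (v.2:ℝ)| := by
                have := abs_sub_le ((w.2:ℝ)) x'.2 x.2
                linarith
          have r1 : |(w.2 : ℝ) - x'.2| ≤ C := by rw [abs_sub_comm]; exact hb2'
          have r2 : |x'.2 - x.2| ≤ 1 := by
            rw [abs_sub_comm]; exact le_trans hd2 hdistle
          linarith
        have i1 : |w.1 - v.1| ≤ M := by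
          have : |((w.1 - v.1 : ℤ) : ℝ)| ≤ (M : ℝ) := by
            push_cast
            exact le_trans e1 hMR
          exact_mod_cast this
        have i2 : |w.2 - v.2| ≤ M := by
          have : |((w.2 - v.2 : ℤ) : ℝ)| ≤ (M : ℝ) := by
            push_cast
            exact le_trans e2 hMR
          exact_mod_cast this
        rw [hF, Finset.mem_Icc]
        rw [abs_le] at i1 i2
        constructor <;> (rw [Prod.le_def]; constructor)
        · exact i1.1
        · exact i2.1
        · exact i1.2
        · exact i2.2
      have hni : ι (w - v) ∉ K - K := fun hmm => hnot ((hdiff _).2 hmm)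
      have hlow : δ ≤ Metric.infDist (ι (w - v)) (K - K) := hδlow _ hmem hni
      have hup : Metric.infDist (ι (w - v)) (K - K) ≤ dist x x' := by
        have hmm : (x - ι v) - (x' - ι w) ∈ K - K := Set.sub_mem_sub hxv hxw
        have := Metric.infDist_le_dist_of_mem (x := ι (w - v)) hmm
        have he : dist (ι (w - v)) ((x - ι v) - (x' - ι w)) = dist x x' := by
          rw [hι_sub, dist_eq_norm, dist_eq_norm,
            show ι w - ι v - (x - ι v - (x' - ι w)) = -(x - x') from by abel, norm_neg]
        rwa [he] at this
      linarith
    -- fine grid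
    set ε : ℝ := δ / 2 with hε
    have hεpos : 0 < ε := by rw [hε]; linarith
    obtain ⟨N, hNbig⟩ : ∃ N : ℕ, (2 * C + 2) ≤ ε * N := by
      refine ⟨⌈(2 * C + 2) / ε⌉₊, ?_⟩
      have h1 : (2 * C + 2) / ε ≤ ((⌈(2 * C + 2) / ε⌉₊ : ℕ) : ℝ) := Nat.le_ceil _
      calc (2 * C + 2) = ε * ((2 * C + 2) / ε) := by field_simp
      _ ≤ ε * _ := mul_le_mul_of_nonneg_left h1 hεpos.le
    set xc : ℕ → ℝ := fun i => -(C + 1) + ε * i with hxc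
    set gp : ℕ → ℕ → ℝ × ℝ := fun i j => (xc i, xc j) with hgp
    choose yy hyy aa bb habb using hcov
    set f : ℕ → ℕ → ℤ × ℤ := fun i j => (aa (gp i j), bb (gp i j)) with hfdef
    have hfK : ∀ i j, gp i j - ι (f i j) ∈ K := by
      intro i j
      have h1 := habb (gp i j)
      have h2 : ι (f i j) = gp i j - yy (gp i j) := h1.symm
      rw [h2]
      have : gp i j - (gp i j - yy (gp i j)) = yy (gp i j) := by abel
      rw [this]
      exact hyy _
    have hfb : ∀ i j, |xc i - ((f i j).1 : ℝ)| ≤ C ∧ |xc j - ((f i j).2 : ℝ)| ≤ C := by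
      intro i j
      exact hbound (gp i j) (f i j) (hfK i j)
    -- boundary coordinate facts
    have hxc0 : xc 0 = -(C + 1) := by simp [hxc]
    have hxcN : C + 1 ≤ xc N := by
      rw [hxc]
      simp only
      linarith
    have hbot : ∀ i, (f i 0).2 ≤ 0 := by
      intro i
      have h := (hfb i 0).2
      rw [abs_le] at h
      have : ((f i 0).2 : ℝ) ≤ 0 := by rw [hxc0] at h; linarith [h.2]
      exact_mod_cast this
    have htop : ∀ i, 1 ≤ (f i N).2 := by
      intro i
      have h := (hfb i N).2
      rw [abs_le] at h
      have : (1 : ℝ) ≤ ((f i N).2 : ℝ) := by linarith [h.1, hxcN]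
      exact_mod_cast this
    have hleft : ∀ j, (f 0 j).1 ≤ 0 := by
      intro j
      have h := (hfb 0 j).1
      rw [abs_le] at h
      have : ((f 0 j).1 : ℝ) ≤ 0 := by rw [hxc0] at h; linarith [h.2]
      exact_mod_cast this
    have hright : ∀ j, 1 ≤ (f N j).1 := by
      intro j
      have h := (hfb N j).1
      rw [abs_le] at h
      have : (1 : ℝ) ≤ ((f N j).1 : ℝ) := by linarith [h.1, hxcN]
      exact_mod_cast this
    -- adjacency within a cell
    have hadj : ∀ i j i' j', i ≤ i' + 1 → i' ≤ i + 1 → j ≤ j' + 1 → j' ≤ j + 1 →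
        ((f i' j').1 - (f i j).1).natAbs + ((f i' j').2 - (f i j).2).natAbs ≤ 1 := by
      intro i j i' j' hi1 hi2 hj1 hj2
      have hdg : dist (gp i j) (gp i' j') < δ := by
        have hx1 : |xc i - xc i'| ≤ ε := by
          rw [hxc]
          simp only
          rw [abs_le]
          have h1 : (i : ℝ) ≤ i' + 1 := by exact_mod_cast hi1
          have h2 : (i' : ℝ) ≤ i + 1 := by exact_mod_cast hi2
          constructor <;> nlinarith
        have hx2 : |xc j - xc j'| ≤ ε := by
          rw [hxc]
          simp only
          rw [abs_le]
          have h1 : (j : ℝ) ≤ j' + 1 := by exact_mod_cast hj1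
          have h2 : (j' : ℝ) ≤ j + 1 := by exact_mod_cast hj2
          constructor <;> nlinarith
        rw [Prod.dist_eq]
        have : ε < δ := by rw [hε]; linarith
        apply max_lt
        · rw [Real.dist_eq]
          calc |(gp i j).1 - (gp i' j').1| = |xc i - xc i'| := rfl
          _ ≤ ε := hx1
          _ < δ := this
        · rw [Real.dist_eq]
          calc |(gp i j).2 - (gp i' j').2| = |xc j - xc j'| := rfl
          _ ≤ ε := hx2
          _ < δ := this
      have := key (f i j) (f i' j') (gp i j) (gp i' j') (hfK i j) (hfK i' j') hdg
      rw [plusSet_iff] at this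
      simpa using this
    -- the double sum
    set H : ℕ → ℕ → ZMod 2 := fun i j => crossP (f i j) (f (i+1) j) with hH
    set V : ℕ → ℕ → ZMod 2 := fun i j => crossP (f i j) (f i (j+1)) with hV
    have hcell : ∀ i j, (H i j + H i (j+1)) + (V i j + V (i+1) j) = 0 := by
      intro i j
      have e := cell_lemma (f i j) (f (i+1) j) (f i (j+1)) (f (i+1) (j+1))
        (hadj i j (i+1) j (by omega) (by omega) (by omega) (by omega))
        (hadj i j i (j+1) (by omega) (by omega) (by omega) (by omega))
        (hadj i j (i+1) (j+1) (by omega) (by omega) (by omega) (by omega))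
        (hadj (i+1) j i (j+1) (by omega) (by omega) (by omega) (by omega))
        (hadj (i+1) j (i+1) (j+1) (by omega) (by omega) (by omega) (by omega))
        (hadj i (j+1) (i+1) (j+1) (by omega) (by omega) (by omega) (by omega))
      simp only [hH, hV]
      linear_combination e
    have hH0 : ∀ i, H i 0 = 0 := by
      intro i
      apply crossP_tau_eq
      unfold tauP
      rw [if_neg (by have := hbot i; omega), if_neg (by have := hbot (i+1); omega)]
    have hHN : ∀ i, H i N = 0 := by
      intro i
      apply crossP_tau_eq
      unfold tauP
      rw [if_pos (htop i), if_pos (htop (i+1))]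
    have hV0 : ∀ j, V 0 j = 0 := by
      intro j
      show crossP _ _ = 0
      unfold crossP
      rw [if_neg]
      rintro ⟨h1, -⟩
      have := hleft j
      omega
    have hVNj : ∀ j, V N j = tauP (f N j) + tauP (f N (j+1)) := by
      intro j
      show crossP _ _ = _
      unfold crossP
      rw [if_pos ⟨hright j, hright (j+1)⟩]
    have hVN : (∑ j ∈ Finset.range N, V N j) = 1 := by
      rw [Finset.sum_congr rfl (fun j _ => hVNj j), tele (fun j => tauP (f N j)) N]
      have t0 : tauP (f N 0) = 0 := by
        unfold tauP
        rw [if_neg (by have := hbot N; omega)]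
      have t1 : tauP (f N N) = 1 := by
        unfold tauP
        rw [if_pos (htop N)]
      rw [t0, t1, zero_add]
    have h0 : ∑ i ∈ Finset.range N, ∑ j ∈ Finset.range N,
        ((H i j + H i (j+1)) + (V i j + V (i+1) j)) = 0 :=
      Finset.sum_eq_zero (fun i _ => Finset.sum_eq_zero (fun j _ => hcell i j))
    have h1 : ∑ i ∈ Finset.range N, ∑ j ∈ Finset.range N,
        ((H i j + H i (j+1)) + (V i j + V (i+1) j))
        = (∑ i ∈ Finset.range N, (H i 0 + H i N)) +
          (∑ j ∈ Finset.range N, (V 0 j + V N j)) := by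
      have e1 : ∀ i, ∑ j ∈ Finset.range N, ((H i j + H i (j+1)) + (V i j + V (i+1) j))
          = (H i 0 + H i N) + ∑ j ∈ Finset.range N, (V i j + V (i+1) j) := by
        intro i
        rw [Finset.sum_add_distrib, tele (fun j => H i j) N]
      rw [Finset.sum_congr rfl (fun i _ => e1 i), Finset.sum_add_distrib]
      congr 1
      rw [Finset.sum_comm]
      exact Finset.sum_congr rfl (fun j _ => tele (fun i => V i j) N)
    have hfin : (0 : ZMod 2) = 1 := by
      rw [← h0, h1]
      rw [Finset.sum_congr rfl (fun i _ => by rw [hH0 i, hHN i, add_zero] :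
        ∀ i ∈ Finset.range N, (H i 0 + H i N) = 0)]
      rw [Finset.sum_const_zero, zero_add, Finset.sum_add_distrib,
        Finset.sum_congr rfl (fun j _ => hV0 j), Finset.sum_const_zero, zero_add, hVN]
    exact absurd hfin (by decide)
end

section
/- If K ⊆ ℝⁿ is compact and K + ℤⁿ = ℝⁿ, then the set A = (K − K) ∩ ℤⁿ is a finite generating set of the group ℤⁿ. -/
open Pointwise

/-- The integer vector `z ∈ ℤⁿ` viewed as a point of `ℝⁿ`. -/
noncomputable def intVec (n : ℕ) (z : Fin n → ℤ) : EuclideanSpace ℝ (Fin n) :=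
  (WithLp.equiv 2 (Fin n → ℝ)).symm (fun i => (z i : ℝ))

lemma intVec_apply (n : ℕ) (z : Fin n → ℤ) (i : Fin n) : intVec n z i = (z i : ℝ) := rfl

lemma intVec_zero (n : ℕ) : intVec n 0 = 0 := by
  ext i
  show ((0:ℤ):ℝ) = (0 : EuclideanSpace ℝ (Fin n)) i
  norm_num

lemma intVec_add (n : ℕ) (z w : Fin n → ℤ) :
    intVec n (z + w) = intVec n z + intVec n w := by
  ext i
  show ((z i + w i : ℤ) : ℝ) = intVec n z i + intVec n w i
  push_cast [intVec_apply]; ring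

lemma intVec_neg (n : ℕ) (z : Fin n → ℤ) : intVec n (-z) = -(intVec n z) := by
  ext i
  show ((-(z i) : ℤ) : ℝ) = -(intVec n z i)
  push_cast [intVec_apply]; ring

lemma intVec_sub (n : ℕ) (z w : Fin n → ℤ) :
    intVec n (z - w) = intVec n z - intVec n w := by
  rw [sub_eq_add_neg, sub_eq_add_neg, intVec_add, intVec_neg]

lemma coord_le_norm (n : ℕ) (x : EuclideanSpace ℝ (Fin n)) (i : Fin n) : ‖x i‖ ≤ ‖x‖ := by
  rw [EuclideanSpace.norm_eq x]
  have : ‖x i‖ ^ 2 ≤ ∑ j, ‖x j‖ ^ 2 :=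
    Finset.single_le_sum (fun j _ => sq_nonneg ‖x j‖) (Finset.mem_univ i)
  calc ‖x i‖ = Real.sqrt (‖x i‖ ^ 2) := by rw [Real.sqrt_sq (norm_nonneg _)]
    _ ≤ _ := Real.sqrt_le_sqrt this

lemma finite_small_norm (n : ℕ) (C : ℝ) : {z : Fin n → ℤ | ‖intVec n z‖ ≤ C}.Finite := by
  apply Set.Finite.subset (Set.Finite.pi (fun i : Fin n => Set.finite_Icc (-⌈C⌉) ⌈C⌉))
  intro z hz
  simp only [Set.mem_pi, Set.mem_univ, Set.mem_Icc, forall_true_left]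
  intro i
  have h1 : |(z i : ℝ)| ≤ C := by
    have := coord_le_norm n (intVec n z) i
    rw [intVec_apply] at this
    simpa using this.trans hz
  have h2 : (z i : ℝ) ≤ (⌈C⌉ : ℝ) := (le_abs_self _).trans (h1.trans (Int.le_ceil C))
  have h3 : ((-⌈C⌉ : ℤ) : ℝ) ≤ (z i : ℝ) := by
    push_cast
    have := (neg_abs_le ((z i : ℝ))).trans (le_refl _)
    have h4 : -C ≤ (z i : ℝ) := by
      have := neg_le_of_abs_le h1
      linarith
    have := Int.le_ceil C
    linarith
  exact ⟨by exact_mod_cast h3, by exact_mod_cast h2⟩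

theorem diffSet_lattice_generates (n : ℕ) (K : Set (EuclideanSpace ℝ (Fin n)))
    (hK : IsCompact K)
    (hcover : ∀ x : EuclideanSpace ℝ (Fin n), ∃ y ∈ K, ∃ z : Fin n → ℤ,
      x = y + intVec n z) :
    (intVec n ⁻¹' (K - K)).Finite ∧
      AddSubgroup.closure (intVec n ⁻¹' (K - K)) = ⊤ := by
  obtain ⟨y0, hy0, z0, hz0⟩ := hcover 0
  obtain ⟨R, hR⟩ := hK.isBounded.subset_closedBall 0
  have hnormK : ∀ y ∈ K, ‖y‖ ≤ R := fun y hy => by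
    simpa [Metric.mem_closedBall, dist_zero_right] using hR hy
  -- finiteness
  have hfin : (intVec n ⁻¹' (K - K)).Finite := by
    apply (finite_small_norm n (R + R)).subset
    intro z hz
    obtain ⟨a, ha, b, hb, hab⟩ := Set.mem_sub.1 hz
    simp only [Set.mem_setOf_eq, ← hab]
    calc ‖a - b‖ ≤ ‖a‖ + ‖b‖ := norm_sub_le a b
      _ ≤ R + R := add_le_add (hnormK a ha) (hnormK b hb)
  refine ⟨hfin, ?_⟩
  set A := intVec n ⁻¹' (K - K) with hA
  set H := AddSubgroup.closure A with hHdef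
  -- closedness of unions of translates of K
  have hclosed : ∀ P : (Fin n → ℤ) → Prop,
      IsClosed {x | ∃ y ∈ K, ∃ w, P w ∧ x = y + intVec n w} := by
    intro P
    set S := {x | ∃ y ∈ K, ∃ w, P w ∧ x = y + intVec n w} with hS
    apply isClosed_of_closure_subset
    intro x hx
    set T := {w : Fin n → ℤ | P w ∧ ‖intVec n w‖ ≤ ‖x‖ + 1 + R} with hT
    have hTfin : T.Finite := ((finite_small_norm n (‖x‖ + 1 + R)).subset (fun w hw => hw.2))
    set FT := ⋃ w ∈ T, (fun y => y + intVec n w) '' K with hFT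
    have hFTclosed : IsClosed FT := by
      apply IsCompact.isClosed
      apply hTfin.isCompact_biUnion
      intro w _
      exact hK.image (continuous_id.add continuous_const)
    have hsub : S ∩ Metric.ball x 1 ⊆ FT := by
      rintro u ⟨⟨y, hy, w, hPw, rfl⟩, hu⟩
      have hu1 : ‖y + intVec n w‖ ≤ ‖x‖ + 1 := by
        have : dist (y + intVec n w) x < 1 := Metric.mem_ball.1 hu
        calc ‖y + intVec n w‖ = ‖(y + intVec n w - x) + x‖ := by rw [sub_add_cancel]
          _ ≤ ‖y + intVec n w - x‖ + ‖x‖ := norm_add_le _ _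
          _ ≤ ‖x‖ + 1 := by
            rw [← dist_eq_norm] at *
            linarith
      have hw : w ∈ T := by
        constructor
        · exact hPw
        · calc ‖intVec n w‖ = ‖(y + intVec n w) - y‖ := by rw [add_sub_cancel_left]
            _ ≤ ‖y + intVec n w‖ + ‖y‖ := norm_sub_le _ _
            _ ≤ (‖x‖ + 1) + R := add_le_add hu1 (hnormK y hy)
      exact Set.mem_biUnion hw ⟨y, hy, rfl⟩
    have hxFT : x ∈ closure FT := by
      apply closure_mono hsub
      rw [mem_closure_iff_nhds] at hx ⊢
      intro t ht
      obtain ⟨u, hu1, hu2⟩ := hx (t ∩ Metric.ball x 1)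
        (Filter.inter_mem ht (Metric.ball_mem_nhds x one_pos))
      exact ⟨u, hu1.1, hu2, hu1.2⟩
    rw [hFTclosed.closure_eq] at hxFT
    obtain ⟨w, hw, y, hy, hxy⟩ := Set.mem_iUnion₂.1 hxFT
    exact ⟨y, hy, w, hw.1, hxy.symm⟩
  set F := {x | ∃ y ∈ K, ∃ w, w ∈ H ∧ x = y + intVec n w} with hFdef
  set G := {x | ∃ y ∈ K, ∃ w, w ∉ H ∧ x = y + intVec n w} with hGdef
  have hFclosed : IsClosed F := hclosed _
  have hGclosed : IsClosed G := hclosed _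
  have hunion : F ∪ G = Set.univ := by
    ext x
    simp only [Set.mem_union, Set.mem_univ, iff_true]
    obtain ⟨y, hy, w, hw⟩ := hcover x
    by_cases h : w ∈ H
    · exact Or.inl ⟨y, hy, w, h, hw⟩
    · exact Or.inr ⟨y, hy, w, h, hw⟩
  have hdisj : Disjoint F G := by
    rw [Set.disjoint_left]
    rintro x ⟨y1, hy1, w1, hw1, rfl⟩ ⟨y2, hy2, w2, hw2, heq⟩
    apply hw2
    have hdiff : intVec n (w2 - w1) = y1 - y2 := by
      rw [intVec_sub, sub_eq_sub_iff_add_eq_add, heq, add_comm]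
    have : w2 - w1 ∈ A := by
      rw [hA, Set.mem_preimage, hdiff]
      exact Set.sub_mem_sub hy1 hy2
    have hmem : w2 - w1 ∈ H := AddSubgroup.subset_closure this
    have := add_mem hmem hw1
    simpa using this
  have hFcompl : F = Gᶜ := by
    ext x
    constructor
    · intro hx hxG
      exact Set.disjoint_left.1 hdisj hx hxG
    · intro hx
      have : x ∈ F ∪ G := hunion ▸ Set.mem_univ x
      rcases this with h | h
      · exact h
      · exact absurd h hx
  have hFopen : IsOpen F := by rw [hFcompl]; exact hGclosed.isOpen_compl
  have hGopen : IsOpen G := by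
    have : G = Fᶜ := by rw [hFcompl, compl_compl]
    rw [this]; exact hFclosed.isOpen_compl
  have hy0F : y0 ∈ F := ⟨y0, hy0, 0, zero_mem H, by rw [intVec_zero, add_zero]⟩
  have hFuniv : Set.univ ⊆ F :=
    isPreconnected_univ.subset_left_of_subset_union hFopen hGopen hdisj
      (by rw [hunion]) ⟨y0, Set.mem_univ _, hy0F⟩
  rw [AddSubgroup.eq_top_iff']
  intro z
  obtain ⟨y, hy, w, hwH, heq⟩ := hFuniv (Set.mem_univ (intVec n z))
  obtain ⟨y', hy', w', hw'H, heq'⟩ := hFuniv (Set.mem_univ (0 : EuclideanSpace ℝ (Fin n)))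
  have hdiff : intVec n (z - w + w') = y - y' := by
    have h1 : y = intVec n (z - w) := by
      rw [intVec_sub, eq_sub_iff_add_eq, add_comm]
      exact (add_comm _ _).trans heq.symm
    have h2 : y' = intVec n (-w') := by
      rw [intVec_neg, eq_neg_iff_add_eq_zero, add_comm]
      exact (add_comm _ _).trans heq'.symm
    rw [h1, h2, ← intVec_sub]
    norm_num
  have hmemA : z - w + w' ∈ A := by
    rw [hA, Set.mem_preimage, hdiff]
    exact Set.sub_mem_sub hy hy'
  have h3 : z - w + w' ∈ H := AddSubgroup.subset_closure hmemA
  have : z = (z - w + w') + w - w' := by abel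
  rw [this]
  exact sub_mem (add_mem h3 hwH) hw'H
end

section
/- Let p : ℝ² → T = ℝ²/ℤ² be the covering map, f : [0,1] → T a simple closed null-homotopic curve, f̃ a lift of f (which is a simple closed curve in ℝ²), Ũ the bounded Jordan interior region of f̃, and D̃ = closure of Ũ. Then p restricted to D̃ is injective. -/
/-- The 2-torus `ℝ²/ℤ²`. -/
abbrev Torus2 : Type := AddCircle (1 : ℝ) × AddCircle (1 : ℝ)

/-- The covering projection `ℝ² → ℝ²/ℤ²`. -/
noncomputable def torusProj (x : ℝ × ℝ) : Torus2 :=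
  ((x.1 : AddCircle (1 : ℝ)), (x.2 : AddCircle (1 : ℝ)))

/-- Adding an integer point does not change the projection. -/
lemma torusProj_add_int (z : ℝ × ℝ) (m n : ℤ) :
    torusProj (z + ((m : ℝ), (n : ℝ))) = torusProj z := by
  unfold torusProj
  have h1 : ∀ (x : ℝ) (k : ℤ), ((x + (k : ℝ) : ℝ) : AddCircle (1 : ℝ)) = (x : AddCircle (1 : ℝ)) := by
    intro x k
    have : (((x + (k : ℝ)) - x : ℝ) : AddCircle (1 : ℝ)) = 0 := by
      rw [AddCircle.coe_eq_zero_iff]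
      exact ⟨k, by simp⟩
    rw [← sub_eq_zero, ← QuotientAddGroup.mk_sub]
    exact this
  exact Prod.ext (h1 z.1 m) (h1 z.2 n)

/-- Two points with the same projection differ by an integer vector. -/
lemma torusProj_eq_iff {x y : ℝ × ℝ} (h : torusProj x = torusProj y) :
    ∃ m n : ℤ, y - x = ((m : ℝ), (n : ℝ)) := by
  unfold torusProj at h
  obtain ⟨h1, h2⟩ := Prod.mk.injEq .. ▸ h
  have e1 : ((y.1 - x.1 : ℝ) : AddCircle (1 : ℝ)) = 0 := by
    rw [QuotientAddGroup.mk_sub, sub_eq_zero, h1]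
  have e2 : ((y.2 - x.2 : ℝ) : AddCircle (1 : ℝ)) = 0 := by
    rw [QuotientAddGroup.mk_sub, sub_eq_zero, h2]
  rw [AddCircle.coe_eq_zero_iff] at e1 e2
  obtain ⟨m, hm⟩ := e1
  obtain ⟨n, hn⟩ := e2
  exact ⟨m, n, Prod.ext (by simpa using hm.symm) (by simpa using hn.symm)⟩

theorem proj_injective_on_jordan_region
    (f : C(unitInterval, Torus2)) (hloop : f 0 = f 1)
    (hsimple : Set.InjOn f (Set.Ico (0 : unitInterval) 1))
    (hnull : ContinuousMap.HomotopicRel f (ContinuousMap.const _ (f 0)) {0, 1})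
    (ftil : C(unitInterval, ℝ × ℝ)) (hlift : ∀ t, torusProj (ftil t) = f t)
    (hftil_loop : ftil 0 = ftil 1)
    (hftil_simple : Set.InjOn ftil (Set.Ico (0 : unitInterval) 1))
    (U : Set (ℝ × ℝ)) (hU : ∃ x ∈ (Set.range ftil)ᶜ, U = connectedComponentIn (Set.range ftil)ᶜ x)
    (hUbdd : Bornology.IsBounded U) :
    Set.InjOn torusProj (closure U) := by
  classical
  obtain ⟨x₀, hx₀, hUeq⟩ := hU
  set γ : Set (ℝ × ℝ) := Set.range ftil with hγ
  -- the curve is compact, hence closed, hence its complement is open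
  have hγcpt : IsCompact γ := isCompact_range ftil.continuous
  have hSopen : IsOpen γᶜ := hγcpt.isClosed.isOpen_compl
  have hUopen : IsOpen U := hUeq ▸ hSopen.connectedComponentIn
  have hUconn : IsPreconnected U := hUeq ▸ isPreconnected_connectedComponentIn
  have hUsub : U ⊆ γᶜ := hUeq ▸ connectedComponentIn_subset _ _
  have hUne : U.Nonempty := ⟨x₀, hUeq ▸ mem_connectedComponentIn hx₀⟩
  -- any point of U determines the same connected component
  have hcomp : ∀ y ∈ U, connectedComponentIn γᶜ y = U := by
    intro y hy
    rw [hUeq] at hy ⊢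
    exact (connectedComponentIn_eq hy).symm
  -- the closure of U is contained in U ∪ γ
  have hclosure : closure U ⊆ U ∪ γ := by
    intro z hz
    by_cases hzγ : z ∈ γ
    · exact Or.inr hzγ
    · left
      have hzS : z ∈ γᶜ := hzγ
      have hopen : IsOpen (connectedComponentIn γᶜ z) := hSopen.connectedComponentIn
      have hmem : z ∈ connectedComponentIn γᶜ z := mem_connectedComponentIn hzS
      obtain ⟨w, hw1, hw2⟩ := mem_closure_iff.mp hz _ hopen hmem
      have : connectedComponentIn γᶜ z = connectedComponentIn γᶜ w := connectedComponentIn_eq hw1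
      rw [this, hcomp w hw2] at hmem
      exact hmem
  -- equal values of f give equal values of the lift
  have lift_eq : ∀ s t : unitInterval, f s = f t → ftil s = ftil t := by
    intro s t hst
    rcases (unitInterval.le_one' : s ≤ 1).lt_or_eq with hs | hs <;>
      rcases (unitInterval.le_one' : t ≤ 1).lt_or_eq with ht | ht
    · rw [hsimple ⟨unitInterval.nonneg', hs⟩ ⟨unitInterval.nonneg', ht⟩ hst]
    · have h0 : f s = f 0 := by rw [hst, ht, ← hloop]
      have h01 : (0 : unitInterval) < 1 := by
        rw [← Subtype.coe_lt_coe]; norm_num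
      have : s = 0 := hsimple ⟨unitInterval.nonneg', hs⟩ ⟨le_refl _, h01⟩ h0
      rw [this, hftil_loop, ht]
    · have h0 : f t = f 0 := by rw [← hst, hs, ← hloop]
      have h01 : (0 : unitInterval) < 1 := by
        rw [← Subtype.coe_lt_coe]; norm_num
      have : t = 0 := hsimple ⟨unitInterval.nonneg', ht⟩ ⟨le_refl _, h01⟩ h0
      rw [this, hftil_loop, hs]
    · rw [hs, ht]
  -- the curve is disjoint from its nonzero integer translates
  have key_curve : ∀ v : ℝ × ℝ, (∃ m n : ℤ, v = ((m : ℝ), (n : ℝ))) → v ≠ 0 →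
      ∀ s t : unitInterval, ftil s ≠ ftil t + v := by
    intro v ⟨m, n, hv⟩ hv0 s t heq
    have : f s = f t := by
      rw [← hlift, ← hlift, heq, hv, torusProj_add_int]
    have h2 : ftil s = ftil t := lift_eq s t this
    rw [h2, left_eq_add] at heq
    exact hv0 heq
  -- a nonzero integer translate of the curve cannot meet U
  have lemA : ∀ v : ℝ × ℝ, (∃ m n : ℤ, v = ((m : ℝ), (n : ℝ))) → v ≠ 0 →
      ∀ s : unitInterval, ftil s + v ∉ U := by
    intro v hvint hv0 s hsU
    -- the translated curve lies in U
    have hγv_sub : (fun z => z + v) '' γ ⊆ U := by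
      have hpre : IsPreconnected ((fun z => z + v) '' γ) :=
        (isPreconnected_range ftil.continuous).image _ (continuous_add_right v).continuousOn
      have hsubS : (fun z => z + v) '' γ ⊆ γᶜ := by
        rintro _ ⟨w, ⟨t, rfl⟩, rfl⟩ ⟨s', hs'⟩
        exact key_curve v hvint hv0 s' t hs'
      have hmem : ftil s + v ∈ (fun z => z + v) '' γ := ⟨ftil s, ⟨s, rfl⟩, rfl⟩
      rw [← hcomp _ hsU]
      exact hpre.subset_connectedComponentIn hmem hsubS
    -- maximize the linear functional ⟨·, v⟩ on the compact closure of U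
    set ℓ : ℝ × ℝ → ℝ := fun z => z.1 * v.1 + z.2 * v.2 with hℓ
    have hℓcont : Continuous ℓ := by fun_prop
    have hvpos : 0 < v.1 * v.1 + v.2 * v.2 := by
      have h1 : v.1 ≠ 0 ∨ v.2 ≠ 0 := by
        by_contra hc
        push_neg at hc
        exact hv0 (Prod.ext hc.1 hc.2)
      rcases h1 with h1 | h1
      · nlinarith [mul_self_nonneg v.2, mul_self_pos.mpr h1]
      · nlinarith [mul_self_nonneg v.1, mul_self_pos.mpr h1]
    have hℓadd : ∀ z : ℝ × ℝ, ℓ (z + v) = ℓ z + (v.1 * v.1 + v.2 * v.2) := by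
      intro z; simp only [hℓ, Prod.fst_add, Prod.snd_add]; ring
    have hDcpt : IsCompact (closure U) := hUbdd.isCompact_closure
    have hDne : (closure U).Nonempty := hUne.closure
    obtain ⟨z, hzD, hzmax⟩ := hDcpt.exists_isMaxOn hDne hℓcont.continuousOn
    -- the maximum cannot be attained in the open set U
    have hzU : z ∉ U := by
      intro hzU
      obtain ⟨ε, hε, hball⟩ := Metric.isOpen_iff.mp hUopen z hzU
      have hvnorm : 0 < ‖v‖ := norm_pos_iff.mpr hv0
      set δ : ℝ := ε / (2 * ‖v‖) with hδ
      have hδpos : 0 < δ := div_pos hε (by positivity)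
      have hmem : z + δ • v ∈ U := by
        apply hball
        rw [Metric.mem_ball, dist_eq_norm]
        have : z + δ • v - z = δ • v := by abel
        rw [this, norm_smul, Real.norm_eq_abs, abs_of_pos hδpos, hδ]
        rw [div_mul_eq_mul_div, mul_comm (2 : ℝ) ‖v‖, ← div_div]
        rw [mul_div_assoc, div_self hvnorm.ne', mul_one]
        linarith
      have hle : ℓ (z + δ • v) ≤ ℓ z := hzmax (subset_closure hmem)
      have : ℓ (z + δ • v) = ℓ z + δ * (v.1 * v.1 + v.2 * v.2) := by
        simp only [hℓ, Prod.fst_add, Prod.snd_add, Prod.smul_fst, Prod.smul_snd, smul_eq_mul]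
        ring
      nlinarith
    -- hence the maximum lies on the curve, contradiction with the translate being in U
    obtain ⟨t, ht⟩ : z ∈ γ := (hclosure hzD).resolve_left hzU
    have hmem : ftil t + v ∈ closure U :=
      subset_closure (hγv_sub ⟨ftil t, ⟨t, rfl⟩, rfl⟩)
    have hle : ℓ (ftil t + v) ≤ ℓ z := hzmax hmem
    rw [ht, hℓadd] at hle
    nlinarith
  -- U is disjoint from its nonzero integer translates
  have lemB : ∀ v : ℝ × ℝ, (∃ m n : ℤ, v = ((m : ℝ), (n : ℝ))) → v ≠ 0 →
      ∀ z ∈ U, z + v ∉ U := by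
    intro v hvint hv0 z hzU hzvU
    have hvint' : ∃ m n : ℤ, -v = ((m : ℝ), (n : ℝ)) := by
      obtain ⟨m, n, hv⟩ := hvint
      exact ⟨-m, -n, by rw [hv]; simp [Prod.ext_iff]⟩
    -- the translate U + v is contained in U
    have hUv_sub : (fun w => w + v) '' U ⊆ U := by
      have hpre : IsPreconnected ((fun w => w + v) '' U) :=
        hUconn.image _ (continuous_add_right v).continuousOn
      have hsubS : (fun w => w + v) '' U ⊆ γᶜ := by
        rintro _ ⟨w, hw, rfl⟩ ⟨s, hs⟩
        have : ftil s + -v ∈ U := by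
          rw [hs]; simpa using hw
        exact lemA (-v) hvint' (neg_ne_zero.mpr hv0) s this
      have hmem : z + v ∈ (fun w => w + v) '' U := ⟨z, hzU, rfl⟩
      have := hpre.subset_connectedComponentIn hmem hsubS
      rwa [hcomp _ hzvU] at this
    -- iterate the translation to contradict boundedness
    have hiter : ∀ k : ℕ, z + (k : ℝ) • v ∈ U := by
      intro k
      induction k with
      | zero => simpa using hzU
      | succ k ih =>
          have : (z + (k : ℝ) • v) + v ∈ U := hUv_sub ⟨z + (k : ℝ) • v, ih, rfl⟩
          have heq : (z + (k : ℝ) • v) + v = z + ((k + 1 : ℕ) : ℝ) • v := by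
            push_cast
            rw [add_smul, one_smul]; abel
          rwa [heq] at this
    obtain ⟨R, hR⟩ := isBounded_iff_forall_norm_le.mp hUbdd
    have hvnorm : 0 < ‖v‖ := norm_pos_iff.mpr hv0
    obtain ⟨k, hk⟩ := exists_nat_gt ((R + ‖z‖) / ‖v‖)
    have hk' : R + ‖z‖ < k * ‖v‖ := by
      rwa [div_lt_iff₀ hvnorm] at hk
    have h1 : ‖z + (k : ℝ) • v‖ ≤ R := hR _ (hiter k)
    have h2 : (k : ℝ) * ‖v‖ - ‖z‖ ≤ ‖z + (k : ℝ) • v‖ := by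
      have hkey : ‖((k : ℝ) • v : ℝ × ℝ)‖ ≤ ‖z + (k : ℝ) • v‖ + ‖z‖ := by
        calc ‖((k : ℝ) • v : ℝ × ℝ)‖ = ‖(z + (k : ℝ) • v) - z‖ := by congr 1; abel
          _ ≤ ‖z + (k : ℝ) • v‖ + ‖z‖ := norm_sub_le _ _
      have hnrm : ‖((k : ℝ) • v : ℝ × ℝ)‖ = (k : ℝ) * ‖v‖ := by
        rw [norm_smul, Real.norm_eq_abs, abs_of_nonneg (Nat.cast_nonneg k)]
      linarith
    linarith
  -- final argument
  intro x hx y hy hxy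
  obtain ⟨m, n, hv⟩ := torusProj_eq_iff hxy
  set v : ℝ × ℝ := y - x with hvdef
  by_cases hv0 : v = 0
  · rw [hvdef, sub_eq_zero] at hv0
    exact hv0.symm
  · exfalso
    have hvint : ∃ m n : ℤ, v = ((m : ℝ), (n : ℝ)) := ⟨m, n, hv⟩
    have hyx : y = x + v := by rw [hvdef]; abel
    rcases hclosure hx with hxU | ⟨s, hs⟩ <;> rcases hclosure hy with hyU | ⟨t, ht⟩
    · exact lemB v hvint hv0 x hxU (hyx ▸ hyU)
    · -- x ∈ U, y ∈ γ : x = ftil t + (-v) ∈ U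
      have hvint' : ∃ m' n' : ℤ, -v = ((m' : ℝ), (n' : ℝ)) := by
        exact ⟨-m, -n, by rw [hv]; simp [Prod.ext_iff]⟩
      have : ftil t + -v ∈ U := by
        have : x = ftil t + -v := by rw [ht, hyx]; abel
        rwa [← this]
      exact lemA (-v) hvint' (neg_ne_zero.mpr hv0) t this
    · -- x ∈ γ, y ∈ U : y = ftil s + v ∈ U
      have : ftil s + v ∈ U := by
        rw [hs, ← hyx]; exact hyU
      exact lemA v hvint hv0 s this
    · -- x, y ∈ γ
      have : ftil t = ftil s + v := by rw [hs, ht, ← hyx]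
      exact key_curve v hvint hv0 t s this
end

section
/- Let f̃ : [0,1] → ℝ² be a simple closed curve with Jordan interior Ũ and D̃ = closure(Ũ), and let a ∈ ℤ² \ {0} be such that the translates Im(f̃) and Im(f̃) + a are disjoint. Then D̃ ∩ (D̃ + a) = ∅. -/
open Set Metric Bornology

/-- Frontier of a connected component of the complement of a closed set lies in the set. -/
lemma frontier_ccIn_subset {α : Type*} [TopologicalSpace α] [LocallyConnectedSpace α]
    {C : Set α} (hC : IsClosed C) (x : α) :
    frontier (connectedComponentIn Cᶜ x) ⊆ C := by
  intro z hz
  by_contra hzC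
  have hzc : z ∈ Cᶜ := hzC
  have hVopen : IsOpen (connectedComponentIn Cᶜ z) := hC.isOpen_compl.connectedComponentIn
  have hzV : z ∈ connectedComponentIn Cᶜ z := mem_connectedComponentIn hzc
  have hzcl : z ∈ closure (connectedComponentIn Cᶜ x) := hz.1
  rcases mem_closure_iff_nhds.1 hzcl _ (hVopen.mem_nhds hzV) with ⟨y, hyV, hyU⟩
  have h1 : connectedComponentIn Cᶜ x = connectedComponentIn Cᶜ y :=
    connectedComponentIn_eq hyU
  have h2 : connectedComponentIn Cᶜ z = connectedComponentIn Cᶜ y :=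
    connectedComponentIn_eq hyV
  apply hz.2
  rw [(hC.isOpen_compl.connectedComponentIn (x := x)).interior_eq, h1, ← h2]
  exact hzV

/-- A nonempty bounded set can't absorb its own (nonzero) translate. -/
lemma no_translate_subset {D : Set (ℝ × ℝ)} (hb : IsBounded D) (hne : D.Nonempty)
    {a : ℝ × ℝ} (ha : a ≠ 0) (h : (fun x => x + a) '' D ⊆ D) : False := by
  obtain ⟨x0, hx0⟩ := hne
  obtain ⟨R, hR⟩ := hb.subset_closedBall 0
  have key : ∀ n : ℕ, x0 + n • a ∈ D := by
    intro n
    induction n with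
    | zero => simpa using hx0
    | succ n ih =>
        have h2 : (x0 + n • a) + a ∈ D := h ⟨_, ih, rfl⟩
        have h6 : x0 + (n + 1) • a = (x0 + n • a) + a := by rw [succ_nsmul]; abel
        rw [h6]
        exact h2
  have hapos : 0 < ‖a‖ := norm_pos_iff.2 ha
  obtain ⟨n, hn⟩ := exists_nat_gt ((R + ‖x0‖) / ‖a‖)
  have h1 : ‖x0 + n • a‖ ≤ R := by simpa using hR (key n)
  have h2 : ‖(n : ℕ) • a‖ - ‖x0‖ ≤ ‖x0 + n • a‖ := by
    have h5 : ‖(x0 + n • a) - x0‖ ≤ ‖x0 + n • a‖ + ‖x0‖ := norm_sub_le _ _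
    have h6 : (x0 + n • a) - x0 = n • a := by abel
    rw [h6] at h5
    linarith
  have h3 : ‖(n : ℕ) • a‖ = n * ‖a‖ := by
    rw [← Nat.cast_smul_eq_nsmul ℝ, norm_smul, Real.norm_natCast]
  have h4 : (R + ‖x0‖) < n * ‖a‖ := by rwa [div_lt_iff₀ hapos] at hn
  rw [h3] at h2
  linarith

theorem jordan_regions_of_disjoint_translates_disjoint
    (ftil : C(unitInterval, ℝ × ℝ)) (hloop : ftil 0 = ftil 1)
    (hsimple : Set.InjOn ftil (Set.Ico (0 : unitInterval) 1))
    (U : Set (ℝ × ℝ))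
    (hU : ∃ x ∈ (Set.range ftil)ᶜ, U = connectedComponentIn (Set.range ftil)ᶜ x)
    (hUbdd : Bornology.IsBounded U)
    (D : Set (ℝ × ℝ)) (hD : D = closure U)
    (m : ℤ × ℤ) (hm : m ≠ 0) (a : ℝ × ℝ) (ha : a = ((m.1 : ℝ), (m.2 : ℝ)))
    (hdisj : Set.range ftil ∩ ((fun x => x + a) '' Set.range ftil) = ∅) :
    D ∩ ((fun x => x + a) '' D) = ∅ := by
  classical
  set C : Set (ℝ × ℝ) := Set.range ftil with hCdef
  obtain ⟨x, hxC, hUdef⟩ := hU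
  set f : ℝ × ℝ → ℝ × ℝ := fun p => p + a with hfdef
  set C' : Set (ℝ × ℝ) := f '' C with hC'def
  have hane : a ≠ 0 := by
    intro h
    apply hm
    rw [ha, Prod.ext_iff] at h
    simp only [Prod.fst_zero, Prod.snd_zero] at h
    exact Prod.ext (by exact_mod_cast h.1) (by exact_mod_cast h.2)
  have hTf : ⇑(Homeomorph.addRight a) = f := rfl
  have hfbij : Function.Bijective f := (Homeomorph.addRight a).bijective
  have hCcpt : IsCompact C := isCompact_range ftil.continuous
  have hCcl : IsClosed C := hCcpt.isClosed
  have hCne : C.Nonempty := range_nonempty _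
  have hCconn : IsPreconnected C := (isConnected_range ftil.continuous).isPreconnected
  have hCbdd : IsBounded C := hCcpt.isBounded
  have hfcont : Continuous f := continuous_id.add continuous_const
  have hC'cl : IsClosed C' := by
    rw [hC'def, ← hTf]
    exact (Homeomorph.addRight a).isClosedMap _ hCcl
  have hC'conn : IsPreconnected C' := hCconn.image f hfcont.continuousOn
  have hC'bdd : IsBounded C' := (hCcpt.image hfcont).isBounded
  have hCC' : C ∩ C' = ∅ := hdisj
  have hno : ∀ {p : ℝ × ℝ}, p ∈ C → p ∈ C' → False := by
    intro p hp hp'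
    have hmem : p ∈ C ∩ C' := ⟨hp, hp'⟩
    rw [hCC'] at hmem
    exact hmem
  -- facts about U
  have hUopen : IsOpen U := hUdef ▸ hCcl.isOpen_compl.connectedComponentIn
  have hxU : x ∈ U := hUdef ▸ mem_connectedComponentIn hxC
  have hUconn : IsPreconnected U := hUdef ▸ isPreconnected_connectedComponentIn
  have hUsub : U ⊆ Cᶜ := hUdef ▸ connectedComponentIn_subset _ _
  have hfrU : frontier U ⊆ C := hUdef ▸ frontier_ccIn_subset hCcl x
  have hDsub : D ⊆ U ∪ C := by
    rw [hD]
    intro z hz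
    by_cases hzU : z ∈ U
    · exact Or.inl hzU
    · exact Or.inr (hfrU ⟨hz, by rwa [hUopen.interior_eq]⟩)
  have hUD : U ⊆ D := hD ▸ subset_closure
  have hDconn : IsPreconnected D := hD ▸ hUconn.closure
  have hDbdd : IsBounded D := hD ▸ hUbdd.closure
  have hDne : D.Nonempty := ⟨x, hUD hxU⟩
  -- U + a is the connected component of x + a in C'ᶜ
  have himgcompl : f '' Cᶜ = C'ᶜ := by
    rw [hC'def, Set.image_compl_eq hfbij]
  have hUa : f '' U = connectedComponentIn C'ᶜ (f x) := by
    rw [hUdef, ← hTf, Homeomorph.image_connectedComponentIn _ hxC, hTf, himgcompl]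
  have hUaopen : IsOpen (f '' U) := hUa ▸ hC'cl.isOpen_compl.connectedComponentIn
  have hUabdd : IsBounded (f '' U) := by
    obtain ⟨R, hR⟩ := hUbdd.subset_closedBall 0
    apply (isBounded_closedBall (x := (0 : ℝ × ℝ)) (r := R + ‖a‖)).subset
    rintro _ ⟨y, hy, rfl⟩
    have := mem_closedBall_zero_iff.1 (hR hy)
    rw [mem_closedBall_zero_iff]
    calc ‖f y‖ = ‖y + a‖ := rfl
      _ ≤ ‖y‖ + ‖a‖ := norm_add_le _ _
      _ ≤ R + ‖a‖ := by linarith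
  have hDa : f '' D = closure (f '' U) := by
    rw [hD, ← hTf, Homeomorph.image_closure]
  have hDaconn : IsPreconnected (f '' D) := by
    rw [hDa]
    exact (hUconn.image f hfcont.continuousOn).closure
  have hUaDa : f '' U ⊆ f '' D := image_mono hUD
  have hDasub : f '' D ⊆ (f '' U) ∪ C' := by
    rw [hC'def, ← image_union]
    exact image_mono hDsub
  -- contradiction lemmas
  have K1 : ¬ (f '' D ⊆ D) := fun h => no_translate_subset hDbdd hDne hane h
  have K2 : ¬ (D ⊆ f '' D) := by
    intro h
    have hsub : (fun p => p + (-a)) '' D ⊆ D := by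
      rintro q hq
      obtain ⟨y, hy, rfl⟩ := hq
      obtain ⟨z, hz, hzy⟩ := h hy
      have hza : z + a = y := hzy
      have hyz : y + -a = z := by rw [← hza]; abel
      show y + -a ∈ D
      rw [hyz]
      exact hz
    exact no_translate_subset hDbdd hDne (neg_ne_zero.2 hane) hsub
  -- propagation lemmas
  have hCsub : C ⊆ C'ᶜ := fun w hw hw' => hno hw hw'
  have hC'sub : C' ⊆ Cᶜ := fun w hw hw' => hno hw' hw
  have hUeq : ∀ {p : ℝ × ℝ}, p ∈ U → connectedComponentIn Cᶜ p = U := by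
    intro p hp
    rw [hUdef] at hp ⊢
    exact (connectedComponentIn_eq hp).symm
  have hUaeq : ∀ {p : ℝ × ℝ}, p ∈ f '' U → connectedComponentIn C'ᶜ p = f '' U := by
    intro p hp
    rw [hUa] at hp ⊢
    exact (connectedComponentIn_eq hp).symm
  have P1 : ∀ z, z ∈ C ∩ (f '' U) → C ⊆ f '' U := by
    rintro z ⟨hzC2, hzUa⟩
    have h1 := hCconn.subset_connectedComponentIn hzC2 hCsub
    rwa [hUaeq hzUa] at h1
  have P2 : ∀ z, z ∈ C' ∩ U → C' ⊆ U := by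
    rintro z ⟨hzC2, hzU⟩
    have h1 := hC'conn.subset_connectedComponentIn hzC2 hC'sub
    rwa [hUeq hzU] at h1
  -- mutual containment is impossible
  have K3 : C ⊆ f '' U → C' ⊆ U → False := by
    intro hCin hC'in
    obtain ⟨R1, hR1⟩ := hCbdd.subset_closedBall 0
    obtain ⟨R2, hR2⟩ := hUbdd.subset_closedBall 0
    obtain ⟨R3, hR3⟩ := hUabdd.subset_closedBall 0
    obtain ⟨R, hRgt, hR⟩ : ∃ R, 0 < R ∧ C ⊆ closedBall 0 R ∧ U ⊆ closedBall 0 R ∧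
        f '' U ⊆ closedBall 0 R := by
      refine ⟨max 1 (max (max R1 R2) R3), lt_of_lt_of_le one_pos (le_max_left _ _), ?_, ?_, ?_⟩
      · exact hR1.trans (closedBall_subset_closedBall
          (((le_max_left R1 R2).trans (le_max_left _ R3)).trans (le_max_right 1 _)))
      · exact hR2.trans (closedBall_subset_closedBall
          (((le_max_right R1 R2).trans (le_max_left _ R3)).trans (le_max_right 1 _)))
      · exact hR3.trans (closedBall_subset_closedBall
          ((le_max_right (max R1 R2) R3).trans (le_max_right 1 _)))
    obtain ⟨hRC, hRU, hRUa⟩ := hR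
    set w : ℝ × ℝ := (2 * R, 0) with hwdef
    have hwnorm : ‖w‖ = 2 * R := by
      rw [hwdef, Prod.norm_def]
      show max ‖(2 * R : ℝ)‖ ‖(0 : ℝ)‖ = 2 * R
      rw [norm_zero, Real.norm_eq_abs, abs_of_pos (by linarith), max_eq_left (by linarith)]
    have hwC : w ∈ Cᶜ := by
      intro hw
      have := mem_closedBall_zero_iff.1 (hRC hw)
      rw [hwnorm] at this; linarith
    have hwU : w ∉ U := by
      intro hw
      have := mem_closedBall_zero_iff.1 (hRU hw)
      rw [hwnorm] at this; linarith
    have hwUa : w ∉ f '' U := by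
      intro hw
      have := mem_closedBall_zero_iff.1 (hRUa hw)
      rw [hwnorm] at this; linarith
    set W : Set (ℝ × ℝ) := connectedComponentIn Cᶜ w with hWdef
    have hwW : w ∈ W := mem_connectedComponentIn hwC
    have hWU : W ∩ U = ∅ := by
      by_contra h
      obtain ⟨y, hyW, hyU⟩ := nonempty_iff_ne_empty.2 h
      have hUW : U = W := by
        rw [← hUeq hyU, hWdef, connectedComponentIn_eq hyW]
      rw [hUW] at hwU
      exact hwU hwW
    have hWC' : W ⊆ C'ᶜ := by
      intro y hy hy'
      have : y ∈ W ∩ U := ⟨hy, hC'in hy'⟩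
      rw [hWU] at this
      exact this
    have hWW' : W ⊆ connectedComponentIn C'ᶜ w :=
      isPreconnected_connectedComponentIn.subset_connectedComponentIn hwW hWC'
    -- the frontier of W is nonempty
    have hWopen : IsOpen W := hCcl.isOpen_compl.connectedComponentIn
    have hWne : W.Nonempty := ⟨w, hwW⟩
    have hWproper : W ≠ univ := by
      intro h
      obtain ⟨c, hc⟩ := hCne
      have : c ∈ Cᶜ := connectedComponentIn_subset _ _ (h ▸ mem_univ c)
      exact this hc
    have hfrWne : (frontier W).Nonempty := by
      by_contra h
      rw [not_nonempty_iff_eq_empty] at h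
      have hclopen : IsClopen W := by
        constructor
        · have : closure W ⊆ W := by
            intro z hz
            by_contra hzW
            have hmem : z ∈ frontier W := ⟨hz, by rwa [hWopen.interior_eq]⟩
            rw [h] at hmem
            exact hmem
          exact isClosed_of_closure_subset this
        · exact hWopen
      rcases isClopen_iff.1 hclopen with h' | h'
      · exact absurd h' (nonempty_iff_ne_empty.1 hWne)
      · exact hWproper h'
    obtain ⟨c, hcfr⟩ := hfrWne
    have hcC : c ∈ C := frontier_ccIn_subset hCcl w hcfr
    have hcUa : c ∈ f '' U := hCin hcC
    have hccl : c ∈ closure (connectedComponentIn C'ᶜ w) :=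
      closure_mono hWW' hcfr.1
    obtain ⟨y, hyUa, hyW'⟩ := mem_closure_iff_nhds.1 hccl _ (hUaopen.mem_nhds hcUa)
    have heq : f '' U = connectedComponentIn C'ᶜ w := by
      rw [← hUaeq hyUa, connectedComponentIn_eq hyW']
    rw [heq] at hwUa
    exact hwUa (mem_connectedComponentIn (hWC' hwW))
  -- main argument
  rw [eq_empty_iff_forall_notMem]
  rintro z ⟨hzD, hzDa⟩
  rcases hDsub hzD with hzU | hzC
  · rcases hDasub hzDa with hzUa | hzC'
    · -- z ∈ U ∩ (U + a)
      by_cases hUaC : (f '' U) ∩ C = ∅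
      · -- U+a is a connected subset of Cᶜ meeting U, hence U+a ⊆ U, so D+a ⊆ D
        have hUaCc : f '' U ⊆ Cᶜ := by
          intro y hy hy'
          have hmem : y ∈ (f '' U) ∩ C := ⟨hy, hy'⟩
          rw [hUaC] at hmem
          exact hmem
        have hconn : IsPreconnected (f '' U) :=
          hUconn.image f hfcont.continuousOn
        have h1 : f '' U ⊆ connectedComponentIn Cᶜ z :=
          hconn.subset_connectedComponentIn hzUa hUaCc
        have h2 : f '' U ⊆ U := by
          rwa [hUeq hzU] at h1
        apply K1
        rw [hDa, hD]
        exact closure_mono h2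
      · obtain ⟨y, hyUa, hyC⟩ := nonempty_iff_ne_empty.2 hUaC
        have hCin : C ⊆ f '' U := P1 y ⟨hyC, hyUa⟩
        by_cases hUC' : U ∩ C' = ∅
        · -- D is a connected subset of C'ᶜ meeting U+a at z
          have hDC' : D ⊆ C'ᶜ := by
            intro p hp hp'
            rcases hDsub hp with h' | h'
            · have hmem : p ∈ U ∩ C' := ⟨h', hp'⟩
              rw [hUC'] at hmem
              exact hmem
            · exact hno h' hp'
          have h1 : D ⊆ connectedComponentIn C'ᶜ z :=
            hDconn.subset_connectedComponentIn hzD hDC'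
          have h2 : D ⊆ f '' U := by
            rwa [hUaeq hzUa] at h1
          exact K2 (h2.trans hUaDa)
        · obtain ⟨y', hy'U, hy'C'⟩ := nonempty_iff_ne_empty.2 hUC'
          exact K3 hCin (P2 y' ⟨hy'C', hy'U⟩)
    · -- z ∈ U ∩ C'
      have hC'in : C' ⊆ U := P2 z ⟨hzC', hzU⟩
      by_cases hDaC : (f '' D) ∩ C = ∅
      · -- D+a connected ⊆ Cᶜ, meets U at z
        have hDaCc : f '' D ⊆ Cᶜ := by
          intro y hy hy'
          have hmem : y ∈ (f '' D) ∩ C := ⟨hy, hy'⟩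
          rw [hDaC] at hmem
          exact hmem
        have h1 : f '' D ⊆ connectedComponentIn Cᶜ z :=
          hDaconn.subset_connectedComponentIn hzDa hDaCc
        have h2 : f '' D ⊆ U := by
          rwa [hUeq hzU] at h1
        exact K1 (h2.trans hUD)
      · obtain ⟨y, hyDa, hyC⟩ := nonempty_iff_ne_empty.2 hDaC
        rcases hDasub hyDa with hyUa | hyC'
        · exact K3 (P1 y ⟨hyC, hyUa⟩) hC'in
        · exact hno hyC hyC'
  · rcases hDasub hzDa with hzUa | hzC'
    · -- z ∈ C ∩ (U + a)
      have hCin : C ⊆ f '' U := P1 z ⟨hzC, hzUa⟩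
      by_cases hDC' : D ∩ C' = ∅
      · -- D connected ⊆ C'ᶜ, meets U+a at z
        have hDC'c : D ⊆ C'ᶜ := by
          intro y hy hy'
          have hmem : y ∈ D ∩ C' := ⟨hy, hy'⟩
          rw [hDC'] at hmem
          exact hmem
        have h1 : D ⊆ connectedComponentIn C'ᶜ z :=
          hDconn.subset_connectedComponentIn hzD hDC'c
        have h2 : D ⊆ f '' U := by
          rwa [hUaeq hzUa] at h1
        exact K2 (h2.trans hUaDa)
      · obtain ⟨y, hyD, hyC'⟩ := nonempty_iff_ne_empty.2 hDC'
        rcases hDsub hyD with hyU | hyC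
        · exact K3 hCin (P2 y ⟨hyC', hyU⟩)
        · exact hno hyC hyC'
    · -- z ∈ C ∩ C'
      exact hno hzC hzC'
end

section
/- If f̃ : [0,1] → ℝ² is a simple closed curve and f̃' = f̃ + a for some a ∈ ℝ² with Im(f̃) ∩ Im(f̃') = ∅ and Im(f̃) contained in the interior region Ũ' of f̃', then D̃ ⊆ Ũ' where D̃ is the closed Jordan region of f̃; moreover if additionally the Lebesgue measures of D̃ and D̃' are equal this situation is impossible (contradiction), since Ũ' \ D̃ is a nonempty open set of positive measure. -/
open MeasureTheory

open Set Metric in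
private lemma closure_ccIn_aux {X : Type*} [TopologicalSpace X] [LocallyConnectedSpace X]
    {s : Set X} (hs : IsOpen s) (x : X) :
    closure (connectedComponentIn s x) ⊆ connectedComponentIn s x ∪ sᶜ := by
  intro z hz
  by_cases hzs : z ∈ s
  · left
    obtain ⟨w, hw1, hw2⟩ := mem_closure_iff.mp hz _ hs.connectedComponentIn
      (mem_connectedComponentIn hzs)
    have h1 := connectedComponentIn_eq hw1
    have h2 := connectedComponentIn_eq hw2
    rw [h2, ← h1]
    exact mem_connectedComponentIn hzs
  · exact Or.inr hzs

private lemma rank2_aux : 1 < Module.rank ℝ (ℝ × ℝ) := by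
  rw [rank_prod', Module.rank_self]
  norm_num

open Set Metric in
private lemma annulus_conn_aux {R : ℝ} (hR : 0 ≤ R) :
    IsPreconnected {z : ℝ × ℝ | R < ‖z‖} := by
  have : {z : ℝ × ℝ | R < ‖z‖}
      = (fun p : (ℝ × ℝ) × ℝ => p.2 • p.1) '' (sphere (0:ℝ×ℝ) 1 ×ˢ Ioi R) := by
    ext z
    constructor
    · intro hz
      have hz0 : 0 < ‖z‖ := lt_of_le_of_lt hR hz
      refine ⟨(‖z‖⁻¹ • z, ‖z‖), ⟨?_, hz⟩, ?_⟩
      · simp [norm_smul, abs_of_nonneg (inv_nonneg.2 hz0.le), inv_mul_cancel₀ hz0.ne']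
      · simp [smul_smul, mul_inv_cancel₀ hz0.ne']
    · rintro ⟨⟨v, t⟩, ⟨hv, ht⟩, rfl⟩
      have hv' : ‖v‖ = 1 := by simpa using hv
      have ht' : R < t := ht
      simp only [mem_setOf_eq, norm_smul, hv', mul_one, Real.norm_eq_abs]
      rw [abs_of_nonneg (le_of_lt (lt_of_le_of_lt hR ht'))]
      exact ht'
  rw [this]
  exact ((isPreconnected_sphere rank2_aux 0 1).prod isPreconnected_Ioi).image _
    (continuous_snd.smul continuous_fst).continuousOn

theorem jordan_region_in_translate_interior_impossible
    (ftil : C(unitInterval, ℝ × ℝ)) (hloop : ftil 0 = ftil 1)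
    (hsimple : Set.InjOn ftil (Set.Ico (0 : unitInterval) 1))
    (a : ℝ × ℝ) (ftil' : C(unitInterval, ℝ × ℝ)) (hftil' : ∀ t, ftil' t = ftil t + a)
    (U : Set (ℝ × ℝ))
    (hU : ∃ x ∈ (Set.range ftil)ᶜ, U = connectedComponentIn (Set.range ftil)ᶜ x)
    (hUbdd : Bornology.IsBounded U)
    (U' : Set (ℝ × ℝ))
    (hU' : ∃ x ∈ (Set.range ftil')ᶜ, U' = connectedComponentIn (Set.range ftil')ᶜ x)
    (hU'bdd : Bornology.IsBounded U')
    (D D' : Set (ℝ × ℝ)) (hD : D = closure U) (hD' : D' = closure U')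
    (hdisj : Set.range ftil ∩ Set.range ftil' = ∅)
    (hin : Set.range ftil ⊆ U') :
    D ⊆ U' ∧ (volume D = volume D' → False) := by
  open Set Metric in
  obtain ⟨x, hxmem, hUdef⟩ := hU
  obtain ⟨x', hx'mem, hU'def⟩ := hU'
  set A := Set.range ftil with hA
  set A' := Set.range ftil' with hA'
  have hAcpt : IsCompact A := isCompact_range ftil.continuous
  have hA'cpt : IsCompact A' := isCompact_range ftil'.continuous
  have hSo : IsOpen Aᶜ := hAcpt.isClosed.isOpen_compl
  have hS'o : IsOpen A'ᶜ := hA'cpt.isClosed.isOpen_compl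
  have hUopen : IsOpen U := hUdef ▸ hSo.connectedComponentIn
  have hU'open : IsOpen U' := hU'def ▸ hS'o.connectedComponentIn
  have hUsub : U ⊆ Aᶜ := hUdef ▸ connectedComponentIn_subset _ _
  have hU'sub : U' ⊆ A'ᶜ := hU'def ▸ connectedComponentIn_subset _ _
  have hUne : U.Nonempty := ⟨x, hUdef ▸ mem_connectedComponentIn hxmem⟩
  have hU'ne : U'.Nonempty := ⟨x', hU'def ▸ mem_connectedComponentIn hx'mem⟩
  have hUconn : IsPreconnected U := hUdef ▸ isPreconnected_connectedComponentIn
  have hA'img : A' = (fun z => z + a) '' A := by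
    have h1 : ⇑ftil' = (fun z => z + a) ∘ ⇑ftil := funext hftil'
    rw [hA', h1, Set.range_comp]
  have hdisj' : ∀ z, z ∈ A → z ∈ A' → False := by
    intro z h1 h2
    have : z ∈ A ∩ A' := ⟨h1, h2⟩
    rw [hdisj] at this
    exact this
  have ha : a ≠ 0 := by
    rintro rfl
    exact hdisj' (ftil 0) (Set.mem_range_self 0)
      ⟨0, by rw [hftil' 0, add_zero]⟩
  -- bounding ball
  obtain ⟨R₀, hR₀⟩ := (((hAcpt.isBounded.union hA'cpt.isBounded).union hUbdd).union
    hU'bdd).subset_closedBall 0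
  set R := max R₀ 0 with hR
  have hRnn : (0:ℝ) ≤ R := le_max_right _ _
  have hball : A ∪ A' ∪ U ∪ U' ⊆ closedBall 0 R :=
    hR₀.trans (closedBall_subset_closedBall (le_max_left _ _))
  have hnorm : ∀ z ∈ A ∪ A' ∪ U ∪ U', ‖z‖ ≤ R := fun z hz => by
    simpa using mem_closedBall_zero_iff.mp (hball hz)
  set C := {z : ℝ × ℝ | R < ‖z‖} with hC
  have hCconn := annulus_conn_aux hRnn
  have hCA : C ⊆ Aᶜ := fun z hz hzA =>
    absurd (hnorm z (Or.inl (Or.inl (Or.inl hzA)))) (not_le.2 hz)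
  have hCA' : C ⊆ A'ᶜ := fun z hz hzA =>
    absurd (hnorm z (Or.inl (Or.inl (Or.inr hzA)))) (not_le.2 hz)
  set p : ℝ × ℝ := (R + ‖a‖ + 1, 0) with hp
  have hpnorm : ‖p‖ = R + ‖a‖ + 1 := by
    have h0 : (0:ℝ) ≤ R + ‖a‖ + 1 := by positivity
    have h1 : ‖p‖ = |R + ‖a‖ + 1| ⊔ |(0:ℝ)| := by
      rw [hp, Prod.norm_def, Real.norm_eq_abs, Real.norm_eq_abs]
    rw [h1, abs_zero, abs_of_nonneg h0, max_eq_left h0]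
  have hpC : p ∈ C := by
    rw [hC, mem_setOf_eq, hpnorm]
    have := norm_nonneg a
    linarith
  have hpaC : p + a ∈ C := by
    rw [hC, mem_setOf_eq]
    have h1 : ‖p‖ ≤ ‖p + a‖ + ‖a‖ := by
      calc ‖p‖ = ‖p + a - a‖ := by rw [add_sub_cancel_right]
      _ ≤ ‖p + a‖ + ‖a‖ := norm_sub_le _ _
    rw [hpnorm] at h1
    linarith
  set W := connectedComponentIn Aᶜ p with hW
  set W' := connectedComponentIn A'ᶜ p with hW'
  have hCW : C ⊆ W := hCconn.subset_connectedComponentIn hpC hCA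
  have hCW' : C ⊆ W' := hCconn.subset_connectedComponentIn hpC hCA'
  have hWsub : W ⊆ Aᶜ := connectedComponentIn_subset _ _
  have hW'img : W' = (fun z => z + a) '' W := by
    have h2 : (fun z => z + a) '' Aᶜ = A'ᶜ := by
      rw [hA'img]
      exact Set.image_compl_eq (Equiv.addRight a).bijective
    have h1 := (Homeomorph.addRight a).image_connectedComponentIn (hCA hpC)
    simp only [Homeomorph.coe_addRight] at h1
    rw [h2] at h1
    have h3 : p + a ∈ W' := hCW' hpaC
    rw [hW', connectedComponentIn_eq h3, ← h1]
  -- key claim : A' ∩ U = ∅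
  have hkey : ∀ z, z ∈ A' → z ∈ U → False := by
    intro y hyA' hyU
    have hA'sub : A' ⊆ Aᶜ := fun z hz hzA => hdisj' z hzA hz
    have hA'conn : IsPreconnected A' := isPreconnected_range ftil'.continuous
    have hccy : connectedComponentIn Aᶜ x = connectedComponentIn Aᶜ y :=
      connectedComponentIn_eq (by rw [← hUdef]; exact hyU)
    have hA'U : A' ⊆ U := by
      rw [hUdef, hccy]
      exact hA'conn.subset_connectedComponentIn hyA' hA'sub
    have hWU : ∀ z, z ∈ W → z ∈ U → False := by
      intro z hzW hzU
      have h1 : W = connectedComponentIn Aᶜ z := connectedComponentIn_eq hzW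
      have h2 : connectedComponentIn Aᶜ x = connectedComponentIn Aᶜ z :=
        connectedComponentIn_eq (by rw [← hUdef]; exact hzU)
      have hpU : p ∈ U := by
        rw [hUdef, h2, ← h1]
        exact mem_connectedComponentIn (hCA hpC)
      exact absurd (hnorm p (Or.inl (Or.inr hpU))) (not_le.2 hpC)
    have hWA' : W ⊆ A'ᶜ := fun z hz hzA' => hWU z hz (hA'U hzA')
    have hWW' : W ⊆ W' := by
      rw [hW']
      exact isPreconnected_connectedComponentIn.subset_connectedComponentIn
        (mem_connectedComponentIn (hCA hpC)) hWA'
    have hstep : ∀ z : ℝ × ℝ, z ∉ W → z + a ∉ W := by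
      intro z hz hz'
      obtain ⟨w, hw, hwz⟩ := (hW'img ▸ hWW') hz'
      exact hz ((add_right_cancel hwz) ▸ hw)
    have horbit : ∀ n : ℕ, ftil 0 + n • a ∉ W := by
      intro n
      induction n with
      | zero =>
        intro h
        simp only [zero_smul, add_zero] at h
        exact (hWsub h) (Set.mem_range_self 0)
      | succ n ih =>
        have h1 := hstep _ ih
        intro h2
        apply h1
        rw [succ_nsmul, ← add_assoc] at h2
        exact h2
    have hbnd : ∀ n : ℕ, ‖ftil 0 + n • a‖ ≤ R := by
      intro n
      by_contra h
      exact horbit n (hCW (lt_of_not_ge h))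
    have hapos : 0 < ‖a‖ := norm_pos_iff.mpr ha
    obtain ⟨n, hn⟩ := exists_nat_gt ((R + ‖ftil 0‖) / ‖a‖)
    have h1 : ‖(n : ℕ) • a‖ ≤ R + ‖ftil 0‖ := by
      calc ‖(n:ℕ) • a‖ = ‖ftil 0 + n • a - ftil 0‖ := by rw [add_sub_cancel_left]
      _ ≤ ‖ftil 0 + n • a‖ + ‖ftil 0‖ := norm_sub_le _ _
      _ ≤ R + ‖ftil 0‖ := by have := hbnd n; linarith
    have h2 : ‖(n : ℕ) • a‖ = (n : ℝ) * ‖a‖ := by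
      rw [← Nat.cast_smul_eq_nsmul ℝ, norm_smul, Real.norm_natCast]
    rw [h2] at h1
    rw [div_lt_iff₀ hapos] at hn
    linarith
  -- part 1 : closure U ⊆ U'
  have hclU : closure U ⊆ U ∪ A := by
    have h := closure_ccIn_aux hSo x
    rw [← hUdef, compl_compl] at h
    exact h
  have hUA' : closure U ⊆ A'ᶜ := by
    intro z hz hzA'
    rcases hclU hz with h | h
    · exact hkey z hzA' h
    · exact hdisj' z h hzA'
  have hnotuniv : ∀ (V : Set (ℝ × ℝ)), Bornology.IsBounded V → V ≠ Set.univ := by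
    intro V hV hVuniv
    rw [hVuniv] at hV
    obtain ⟨r, hr⟩ := hV.subset_closedBall 0
    have h1 := mem_closedBall_zero_iff.mp (hr (Set.mem_univ ((|r| + 1, 0) : ℝ × ℝ)))
    have h2 : |(|r| + 1)| ≤ r := by
      simpa [Prod.norm_def] using h1
    have h3 : (0:ℝ) ≤ |r| + 1 := by positivity
    rw [abs_of_nonneg h3] at h2
    have := le_abs_self r
    linarith
  have hfrU : (frontier U).Nonempty := by
    rw [nonempty_frontier_iff]
    exact ⟨hUne, hnotuniv U hUbdd⟩
  obtain ⟨q, hq⟩ := hfrU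
  have hqcl : q ∈ closure U := frontier_subset_closure hq
  have hqnU : q ∉ U := by
    rw [hUopen.frontier_eq] at hq
    exact hq.2
  have hqA : q ∈ A := by
    rcases hclU hqcl with h | h
    · exact absurd h hqnU
    · exact h
  have hpart1 : closure U ⊆ U' := by
    have h3 := hUconn.closure.subset_connectedComponentIn hqcl hUA'
    have h4 : q ∈ connectedComponentIn A'ᶜ x' := by rw [← hU'def]; exact hin hqA
    rw [hU'def, connectedComponentIn_eq h4]
    exact h3
  refine ⟨hD ▸ hpart1, ?_⟩
  intro hvol
  have hclU' : closure U' ⊆ U' ∪ A' := by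
    have h := closure_ccIn_aux hS'o x'
    rw [← hU'def, compl_compl] at h
    exact h
  have hex : ∃ y, y ∈ U' \ closure U := by
    by_contra h
    push_neg at h
    have hsub : U' ⊆ closure U := fun z hz => by
      by_contra hz2
      exact (h z) ⟨hz, hz2⟩
    obtain ⟨q', hq'⟩ : (frontier U').Nonempty := by
      rw [nonempty_frontier_iff]
      exact ⟨hU'ne, hnotuniv U' hU'bdd⟩
    have h1 : q' ∈ closure U' := frontier_subset_closure hq'
    have h2 : q' ∉ U' := by
      rw [hU'open.frontier_eq] at hq'
      exact hq'.2
    have hq'A' : q' ∈ A' := by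
      rcases hclU' h1 with h | h
      · exact absurd h h2
      · exact h
    have h3 : q' ∈ closure U := by
      have h4 : closure U' ⊆ closure (closure U) := closure_mono hsub
      simpa using h4 h1
    rcases hclU h3 with h4 | h4
    · exact hkey q' hq'A' h4
    · exact hdisj' q' h4 hq'A'
  obtain ⟨y, hy⟩ := hex
  have hopen2 : IsOpen (U' \ closure U) := hU'open.sdiff isClosed_closure
  have hpos : 0 < volume (U' \ closure U) := hopen2.measure_pos volume ⟨y, hy⟩
  have hDfin : volume (closure U) < ⊤ := by
    have hsub : closure U ⊆ closedBall 0 R :=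
      closure_minimal (fun z hz => hball (Or.inl (Or.inr hz))) Metric.isClosed_closedBall
    exact lt_of_le_of_lt (measure_mono hsub) measure_closedBall_lt_top
  have hsplit : volume U' = volume (closure U) + volume (U' \ closure U) := by
    rw [← measure_union (disjoint_sdiff_right) hopen2.measurableSet,
      Set.union_diff_cancel hpart1]
  have hlt : volume (closure U) < volume (closure U') := by
    calc volume (closure U) < volume (closure U) + volume (U' \ closure U) :=
          ENNReal.lt_add_right hDfin.ne hpos.ne'
    _ = volume U' := hsplit.symm
    _ ≤ volume (closure U') := measure_mono subset_closure
  rw [hD, hD'] at hvol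
  exact absurd hvol hlt.ne
end

section
/- A finite symmetric set A ⊆ ℤ containing 0 generates ℤ if and only if there exists a compact set K ⊆ ℝ with K + ℤ = ℝ and A = (K − K) ∩ ℤ. -/
open Pointwise

lemma nathanson_closed_union (K : Set ℝ) (hK : IsCompact K) (S : Set ℤ) :
    IsClosed (⋃ m : S, (fun y => y + ((m : ℤ) : ℝ)) '' K) := by
  apply LocallyFinite.isClosed_iUnion
  · intro x
    obtain ⟨R, hR⟩ := hK.isBounded.subset_closedBall 0
    refine ⟨Metric.ball x 1, Metric.ball_mem_nhds x one_pos, ?_⟩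
    have hsub : {i : S | (((fun y => y + ((i : ℤ) : ℝ)) '' K) ∩ Metric.ball x 1).Nonempty} ⊆
        (fun i : S => (i : ℤ)) ⁻¹' (Set.Icc ⌈x - 1 - R⌉ ⌊x + 1 + R⌋) := by
      rintro ⟨m, hm⟩ ⟨z, ⟨y, hy, rfl⟩, hz⟩
      have hyR : |y| ≤ R := by simpa [Real.norm_eq_abs] using hR hy
      have hzx : |y + (m : ℝ) - x| < 1 := by simpa [Real.dist_eq] using hz
      simp only [Set.mem_preimage, Set.mem_Icc]
      constructor
      · rw [Int.ceil_le]
        cases abs_le.mp hyR; cases abs_lt.mp hzx; linarith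
      · rw [Int.le_floor]
        cases abs_le.mp hyR; cases abs_lt.mp hzx; linarith
    exact ((Set.finite_Icc _ _).preimage Subtype.val_injective.injOn).subset hsub
  · exact fun i => (hK.image (continuous_id.add continuous_const)).isClosed

lemma nathanson_backward (A : Set ℤ) (K : Set ℝ) (hK : IsCompact K)
    (hcov : ∀ x : ℝ, ∃ y ∈ K, ∃ m : ℤ, x - y = (m : ℝ))
    (hA : ∀ m : ℤ, m ∈ A ↔ (m : ℝ) ∈ K - K) :
    AddSubgroup.closure A = ⊤ := by
  by_contra hne
  rw [AddSubgroup.eq_top_iff'] at hne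
  push_neg at hne
  obtain ⟨m₀, hm₀⟩ := hne
  set H := AddSubgroup.closure A with hH
  set C : Set ℝ := ⋃ m : {m : ℤ | m ∈ H}, (fun y => y + ((m : ℤ) : ℝ)) '' K with hC
  set D : Set ℝ := ⋃ m : {m : ℤ | m ∉ H}, (fun y => y + ((m : ℤ) : ℝ)) '' K with hD
  have hCc : IsClosed C := nathanson_closed_union K hK _
  have hDc : IsClosed D := nathanson_closed_union K hK _
  have hdisj : ∀ x, x ∈ C → x ∈ D → False := by
    rintro x hxC hxD
    obtain ⟨⟨m, hm⟩, y, hy, rfl⟩ := Set.mem_iUnion.mp hxC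
    obtain ⟨⟨m', hm'⟩, y', hy', he⟩ := Set.mem_iUnion.mp hxD
    simp only at he
    have hcast : ((m - m' : ℤ) : ℝ) = y' - y := by push_cast; linarith
    have hdiff : (m - m' : ℤ) ∈ A := by
      rw [hA, hcast]
      exact Set.sub_mem_sub hy' hy
    exact hm' (by simpa using H.sub_mem hm (AddSubgroup.subset_closure hdiff))
  have hunion : C ∪ D = Set.univ := by
    ext x
    simp only [Set.mem_univ, iff_true]
    obtain ⟨y, hy, m, hm⟩ := hcov x
    have hx : x = y + (m : ℝ) := by linarith
    by_cases h : m ∈ H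
    · exact Or.inl (Set.mem_iUnion.mpr ⟨⟨m, h⟩, y, hy, hx.symm⟩)
    · exact Or.inr (Set.mem_iUnion.mpr ⟨⟨m, h⟩, y, hy, hx.symm⟩)
  have hcompl : C = Dᶜ := by
    ext x
    constructor
    · intro hx hxD; exact hdisj x hx hxD
    · intro hx
      rcases (Set.ext_iff.mp hunion x).mpr trivial with h | h
      · exact h
      · exact absurd h hx
  have hclopen : IsClopen C := ⟨hCc, by rw [hcompl]; exact hDc.isOpen_compl⟩
  obtain ⟨y, hy, -⟩ := hcov 0
  rcases isClopen_iff.mp hclopen with h | h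
  · have : y + ((0 : ℤ) : ℝ) ∈ C :=
      Set.mem_iUnion.mpr ⟨⟨0, H.zero_mem⟩, y, hy, rfl⟩
    rw [h] at this; exact this
  · have hyD : y + ((m₀ : ℤ) : ℝ) ∈ D :=
      Set.mem_iUnion.mpr ⟨⟨m₀, hm₀⟩, y, hy, rfl⟩
    exact hdisj _ (h ▸ Set.mem_univ _) hyD


lemma nathanson_forward (A : Set ℤ) (hfin : A.Finite) (hsym : -A = A) (h0 : (0 : ℤ) ∈ A)
    (htop : AddSubgroup.closure A = ⊤) :
    ∃ K : Set ℝ, IsCompact K ∧ (∀ x : ℝ, ∃ y ∈ K, ∃ m : ℤ, x - y = (m : ℝ)) ∧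
      ∀ m : ℤ, m ∈ A ↔ (m : ℝ) ∈ K - K := by
  have hsym' : ∀ a : ℤ, a ∈ A → -a ∈ A := by
    intro a ha
    rw [← hsym]
    simpa using ha
  -- a list of elements of A summing to -1
  have hmem1 : (-1 : ℤ) ∈ AddSubmonoid.closure A := by
    have h := AddSubgroup.closure_toAddSubmonoid A
    rw [hsym, Set.union_self] at h
    have : (-1 : ℤ) ∈ (AddSubgroup.closure A).toAddSubmonoid := by
      rw [htop]; trivial
    rwa [h] at this
  obtain ⟨l₁, hl₁, hsum₁⟩ := AddSubmonoid.exists_list_of_mem_closure hmem1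
  -- the full step list
  set l₀ : List ℤ := hfin.toFinset.toList with hl₀def
  have hl₀ : ∀ a ∈ l₀, a ∈ A := by
    intro a ha
    rw [hl₀def, Finset.mem_toList, Set.Finite.mem_toFinset] at ha
    exact ha
  set L : List ℤ := l₀ ++ l₀.map (fun a => -a) ++ l₁ with hLdef
  have hLmem : ∀ a ∈ L, a ∈ A := by
    intro a ha
    rw [hLdef] at ha
    simp only [List.mem_append, List.mem_map] at ha
    rcases ha with (ha | ⟨b, hb, rfl⟩) | ha
    · exact hl₀ a ha
    · exact hsym' b (hl₀ b hb)
    · exact hl₁ a ha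
  have hLsum : L.sum = -1 := by
    have hneg : (l₀.map (fun a => -a)).sum = -l₀.sum := by
      induction l₀ with
      | nil => simp
      | cons a l ih => simp only [List.map_cons, List.sum_cons, ih]; ring
    rw [hLdef]
    simp [List.sum_append, hneg, hsum₁]
  have hLcov : ∀ a ∈ A, a ∈ L := by
    intro a ha
    rw [hLdef]
    simp only [List.mem_append]
    left; left
    rw [hl₀def, Finset.mem_toList, Set.Finite.mem_toFinset]
    exact ha
  set n : ℕ := L.length with hndef
  have hn : 0 < n := by
    rcases Nat.eq_zero_or_pos n with h | h
    · exfalso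
      have : L = [] := List.length_eq_zero_iff.mp h
      rw [this] at hLsum
      simp at hLsum
    · exact h
  have hN : (0 : ℝ) < (n : ℝ) := by exact_mod_cast hn
  -- the walk
  set w : ℕ → ℤ := fun i => (L.take i).sum with hwdef
  have hw0 : w 0 = 0 := by simp [hwdef]
  have hwsucc : ∀ i (h : i < n), w (i + 1) = w i + L[i] := by
    intro i h
    simpa [hwdef] using List.sum_take_succ L i h
  have hwlast : w (n - 1) + L[n - 1]'(by omega) = -1 := by
    have h1 : (n - 1) + 1 = n := by omega
    have := hwsucc (n - 1) (by omega)
    have hfull : w n = -1 := by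
      show (L.take n).sum = -1
      rw [hndef, List.take_length, hLsum]
    have h2 : w (n - 1 + 1) = w n := by rw [h1]
    omega
  -- the compact set
  set K : Set ℝ := ⋃ i ∈ Finset.range n,
    Set.Icc ((w i : ℝ) + (i : ℝ) / n) ((w i : ℝ) + ((i : ℝ) + 1) / n) with hKdef
  refine ⟨K, ?_, ?_, ?_⟩
  · rw [hKdef]
    apply (Finset.range n).finite_toSet.isCompact_biUnion
    intro i _
    exact isCompact_Icc
  · intro t
    set f := Int.fract t with hfdef
    have hf0 : 0 ≤ f := Int.fract_nonneg t
    have hf1 : f < 1 := Int.fract_lt_one t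
    have hfl0 : 0 ≤ ⌊(n : ℝ) * f⌋ := Int.floor_nonneg.mpr (by positivity)
    set i : ℕ := (⌊(n : ℝ) * f⌋).toNat with hidef
    have hic : (i : ℝ) = (⌊(n : ℝ) * f⌋ : ℝ) := by
      rw [hidef]
      exact_mod_cast congrArg Int.cast (Int.toNat_of_nonneg hfl0)
    have hfl : (i : ℝ) ≤ (n : ℝ) * f := hic ▸ Int.floor_le _
    have hfl2 : (n : ℝ) * f < (i : ℝ) + 1 := hic ▸ Int.lt_floor_add_one _
    have hiln : i < n := by
      have h1 : (n : ℝ) * f < (n : ℝ) * 1 := by nlinarith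
      have h2 : (i : ℝ) < (n : ℝ) := by nlinarith
      exact_mod_cast h2
    refine ⟨(w i : ℝ) + f, ?_, ⌊t⌋ - w i, ?_⟩
    · rw [hKdef]
      refine Set.mem_biUnion (Finset.mem_range.mpr hiln) ?_
      refine Set.mem_Icc.mpr ⟨?_, ?_⟩
      · have : (i : ℝ) / n ≤ f := by
          rw [div_le_iff₀ hN]; linarith
        linarith
      · have : f ≤ ((i : ℝ) + 1) / n := by
          rw [le_div_iff₀ hN]; nlinarith
        linarith
    · have hts : t - f = (⌊t⌋ : ℝ) := Int.self_sub_fract t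
      push_cast
      linarith
  · intro m
    have hmemK : ∀ i : ℕ, i < n → ∀ u : ℝ, (w i : ℝ) + (i : ℝ) / n ≤ u →
        u ≤ (w i : ℝ) + ((i : ℝ) + 1) / n → u ∈ K := by
      intro i hi u h1 h2
      rw [hKdef]
      exact Set.mem_biUnion (Finset.mem_range.mpr hi) (Set.mem_Icc.mpr ⟨h1, h2⟩)
    constructor
    · intro ha
      obtain ⟨j, hj, hja⟩ := List.mem_iff_getElem.mp (hLcov m ha)
      have hjn : j < n := hj
      rw [Set.mem_sub]
      by_cases hj1 : j + 1 < n
      · refine ⟨(w (j + 1) : ℝ) + ((j : ℝ) + 1) / n, ?_, (w j : ℝ) + ((j : ℝ) + 1) / n, ?_, ?_⟩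
        · refine hmemK (j + 1) hj1 _ ?_ ?_
          · push_cast
            linarith
          · push_cast
            have : ((j : ℝ) + 1) / n ≤ ((j : ℝ) + 1 + 1) / n := by gcongr <;> linarith
            linarith
        · refine hmemK j hjn _ ?_ le_rfl
          have : (j : ℝ) / n ≤ ((j : ℝ) + 1) / n := by gcongr <;> linarith
          linarith
        · have := hwsucc j hjn
          rw [hja] at this
          push_cast [this]
          ring
      · -- j = n - 1 : wrap-around step
        have hjeq : j = n - 1 := by omega
        subst hjeq
        refine ⟨(w 0 : ℝ) + (0 : ℝ) / n, ?_, (w (n - 1) : ℝ) + (((n - 1 : ℕ) : ℝ) + 1) / n, ?_, ?_⟩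
        · refine hmemK 0 hn _ ?_ ?_ <;> push_cast <;> simp
        · refine hmemK (n - 1) (by omega) _ ?_ le_rfl
          have : ((n - 1 : ℕ) : ℝ) / n ≤ (((n - 1 : ℕ) : ℝ) + 1) / n := by
            gcongr <;> linarith
          linarith
        · have hcast : ((n - 1 : ℕ) : ℝ) + 1 = (n : ℝ) := by
            push_cast [Nat.cast_sub hn]
            ring
          have hLa : w (n - 1) + m = -1 := by rw [← hja]; exact hwlast
          have : (w (n - 1) : ℤ) = -1 - m := by omega
          rw [hw0, hcast, this]
          push_cast
          field_simp
          ring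
    · intro hm
      rw [Set.mem_sub] at hm
      obtain ⟨u, hu, v, hv, huv⟩ := hm
      rw [hKdef] at hu hv
      obtain ⟨i, hi, hu⟩ := Set.mem_iUnion₂.mp hu
      obtain ⟨j, hj, hv⟩ := Set.mem_iUnion₂.mp hv
      rw [Finset.mem_range] at hi hj
      rw [Set.mem_Icc] at hu hv
      obtain ⟨hu1, hu2⟩ := hu
      obtain ⟨hv1, hv2⟩ := hv
      have hi1 : ((i : ℝ) + 1) / n ≤ 1 := by
        rw [div_le_one hN]
        exact_mod_cast Nat.succ_le_of_lt hi
      have hj1 : ((j : ℝ) + 1) / n ≤ 1 := by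
        rw [div_le_one hN]
        exact_mod_cast Nat.succ_le_of_lt hj
      have hi0 : (0 : ℝ) ≤ (i : ℝ) / n := by positivity
      have hj0 : (0 : ℝ) ≤ (j : ℝ) / n := by positivity
      set d : ℤ := m - w i + w j with hddef
      have hd : (d : ℝ) = (u - (w i : ℝ)) - (v - (w j : ℝ)) := by
        rw [hddef]
        push_cast
        linarith
      have hdb1 : (-1 : ℤ) ≤ d := by
        have : (-1 : ℝ) ≤ (d : ℝ) := by linarith
        exact_mod_cast this
      have hdb2 : d ≤ 1 := by
        have : (d : ℝ) ≤ 1 := by linarith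
        exact_mod_cast this
      obtain ⟨e, he, hwl⟩ : ∃ e : ℤ, e ∈ A ∧ w (n - 1) + e = -1 :=
        ⟨_, hLmem _ (List.getElem_mem _), hwlast⟩
      have hstep : ∀ k, k < n → ∃ e ∈ A, w (k + 1) = w k + e :=
        fun k hk => ⟨L[k], hLmem _ (List.getElem_mem _), hwsucc k hk⟩
      rcases (show d = -1 ∨ d = 0 ∨ d = 1 by omega) with hd0 | hd0 | hd0
      · -- d = -1 : wrap, m = e
        rw [hd0] at hd
        push_cast at hd
        have hvj : v - (w j : ℝ) = 1 ∧ u - (w i : ℝ) = 0 := by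
          constructor <;> linarith
        have hjn : (1 : ℝ) ≤ ((j : ℝ) + 1) / n := by linarith [hvj.1, hv2]
        rw [le_div_iff₀ hN, one_mul] at hjn
        have hjn' : n ≤ j + 1 := by exact_mod_cast hjn
        have hieq : (i : ℝ) / n ≤ 0 := by linarith [hvj.2, hu1]
        rw [div_le_iff₀ hN, zero_mul] at hieq
        have hieq' : i = 0 := by
          have : (i : ℝ) ≤ 0 := hieq
          exact_mod_cast le_antisymm this (by positivity)
        have hjeq : j = n - 1 := by omega
        subst hieq'; subst hjeq
        have hm0 : m = e := by omega
        rw [hm0]; exact he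
      · -- d = 0
        rw [hd0] at hd
        push_cast at hd
        have hst : u - (w i : ℝ) = v - (w j : ℝ) := by linarith
        have h1 : (i : ℝ) / n ≤ ((j : ℝ) + 1) / n := by linarith
        have h2 : (j : ℝ) / n ≤ ((i : ℝ) + 1) / n := by linarith
        rw [div_le_div_iff_of_pos_right hN] at h1 h2
        have h1' : i ≤ j + 1 := by exact_mod_cast h1
        have h2' : j ≤ i + 1 := by exact_mod_cast h2
        rcases (show i = j ∨ i = j + 1 ∨ j = i + 1 by omega) with hij | hij | hij
        · subst hij
          have hm0 : m = 0 := by omega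
          rw [hm0]; exact h0
        · subst hij
          obtain ⟨e', he', hse⟩ := hstep j (by omega)
          have hm0 : m = e' := by omega
          rw [hm0]; exact he'
        · subst hij
          obtain ⟨e', he', hse⟩ := hstep i (by omega)
          have hm0 : m = -e' := by omega
          rw [hm0]; exact hsym' e' he'
      · -- d = 1 : wrap, m = -e
        rw [hd0] at hd
        push_cast at hd
        have hvj : u - (w i : ℝ) = 1 ∧ v - (w j : ℝ) = 0 := by
          constructor <;> linarith
        have hin : (1 : ℝ) ≤ ((i : ℝ) + 1) / n := by linarith [hvj.1, hu2]
        rw [le_div_iff₀ hN, one_mul] at hin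
        have hin' : n ≤ i + 1 := by exact_mod_cast hin
        have hjeq : (j : ℝ) / n ≤ 0 := by linarith [hvj.2, hv1]
        rw [div_le_iff₀ hN, zero_mul] at hjeq
        have hjeq' : j = 0 := by
          have : (j : ℝ) ≤ 0 := hjeq
          exact_mod_cast le_antisymm this (by positivity)
        have hieq : i = n - 1 := by omega
        subst hjeq'; subst hieq
        have hm0 : m = -e := by omega
        rw [hm0]; exact hsym' e he

theorem nathanson_one_dimensional (A : Set ℤ) (hfin : A.Finite) (hsym : -A = A)
    (h0 : (0 : ℤ) ∈ A) :
    AddSubgroup.closure A = ⊤ ↔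
      ∃ K : Set ℝ, IsCompact K ∧ (∀ x : ℝ, ∃ y ∈ K, ∃ m : ℤ, x - y = (m : ℝ)) ∧
        ∀ m : ℤ, m ∈ A ↔ (m : ℝ) ∈ K - K := by
  constructor
  · exact nathanson_forward A hfin hsym h0
  · rintro ⟨K, hK, hcov, hA⟩
    exact nathanson_backward A K hK hcov hA
end
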